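/- arXiv:1401.1708 — 8 statements merged into one kernel-verified Lean document; each statement's English description precedes it below -/
import Mathlib

section
/- For a bivector field π on a manifold M, π is foliated (i.e. the image of π^#: Ω¹(M) → 𝔛(M) is an integrable distribution in the sense that [π^#(Ω¹(M)), π^#(Ω¹(M))] ⊆ π^#(Ω¹(M))) if and only if for every pair of smooth functions F, G on M there exists a 1-form α_{F,G} such that [X_F, X_G] = π^#(α_{F,G}), where X_F = π^#(dF). -/
open Matrix

noncomputable def lieBracketVF {n : ℕ} (X Y : (Fin n → ℝ) → (Fin n → ℝ)) :
    (Fin n → ℝ) → (Fin n → ℝ) :=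
  fun m => fderiv ℝ Y m (X m) - fderiv ℝ X m (Y m)

noncomputable def gradf {n : ℕ} (F : (Fin n → ℝ) → ℝ) (m : Fin n → ℝ) : Fin n → ℝ :=
  fun i => fderiv ℝ F m (Pi.single i 1)

noncomputable def ham {n : ℕ} (π : (Fin n → ℝ) → Matrix (Fin n) (Fin n) ℝ)
    (F : (Fin n → ℝ) → ℝ) : (Fin n → ℝ) → (Fin n → ℝ) :=
  fun m => π m *ᵥ gradf F m

def SmoothBiv {n : ℕ} (π : (Fin n → ℝ) → Matrix (Fin n) (Fin n) ℝ) : Prop :=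
  ∀ i j, ContDiff ℝ (⊤ : ℕ∞) fun m => π m i j

def AntiSymmBiv {n : ℕ} (π : (Fin n → ℝ) → Matrix (Fin n) (Fin n) ℝ) : Prop :=
  ∀ m, (π m)ᵀ = -π m

def Foliated {n : ℕ} (π : (Fin n → ℝ) → Matrix (Fin n) (Fin n) ℝ) : Prop :=
  ∀ α β : (Fin n → ℝ) → (Fin n → ℝ), ContDiff ℝ (⊤ : ℕ∞) α → ContDiff ℝ (⊤ : ℕ∞) β →
    ∃ γ : (Fin n → ℝ) → (Fin n → ℝ), ContDiff ℝ (⊤ : ℕ∞) γ ∧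
      ∀ m, lieBracketVF (fun p => π p *ᵥ α p) (fun p => π p *ᵥ β p) m = π m *ᵥ γ m

def WeaklyFoliated {n : ℕ} (π : (Fin n → ℝ) → Matrix (Fin n) (Fin n) ℝ) : Prop :=
  ∀ α β : (Fin n → ℝ) → (Fin n → ℝ), ContDiff ℝ (⊤ : ℕ∞) α → ContDiff ℝ (⊤ : ℕ∞) β →
    ∀ m, ∃ ξ : Fin n → ℝ,
      lieBracketVF (fun p => π p *ᵥ α p) (fun p => π p *ᵥ β p) m = π m *ᵥ ξ

noncomputable def pd {n : ℕ} (f : (Fin n → ℝ) → ℝ) (l : Fin n) (m : Fin n → ℝ) : ℝ :=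
  fderiv ℝ f m (Pi.single l 1)

noncomputable def schouten {n : ℕ} (π : (Fin n → ℝ) → Matrix (Fin n) (Fin n) ℝ)
    (m : Fin n → ℝ) (i j k : Fin n) : ℝ :=
  ∑ l, (π m l i * pd (fun p => π p j k) l m + π m l j * pd (fun p => π p k i) l m
      + π m l k * pd (fun p => π p i j) l m)

noncomputable def pb {n : ℕ} (π : (Fin n → ℝ) → Matrix (Fin n) (Fin n) ℝ)
    (F G : (Fin n → ℝ) → ℝ) (m : Fin n → ℝ) : ℝ :=
  dotProduct (gradf G m) (π m *ᵥ gradf F m)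

noncomputable def jacobianM {n : ℕ} (X : (Fin n → ℝ) → (Fin n → ℝ)) (m : Fin n → ℝ) :
    Matrix (Fin n) (Fin n) ℝ :=
  Matrix.of fun i l => fderiv ℝ (fun p => X p i) m (Pi.single l 1)

noncomputable def lieDerivBiv {n : ℕ} (X : (Fin n → ℝ) → (Fin n → ℝ))
    (π : (Fin n → ℝ) → Matrix (Fin n) (Fin n) ℝ) (m : Fin n → ℝ) :
    Matrix (Fin n) (Fin n) ℝ :=
  (Matrix.of fun i j => fderiv ℝ (fun p => π p i j) m (X m))
    - jacobianM X m * π m - π m * (jacobianM X m)ᵀ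


section helpers
variable {n : ℕ}

lemma mulVec_comp_eq (π : (Fin n → ℝ) → Matrix (Fin n) (Fin n) ℝ)
    (u : (Fin n → ℝ) → (Fin n → ℝ)) (i : Fin n) :
    (fun p => (π p *ᵥ u p) i) = fun p => ∑ k, π p i k * u p k := by
  funext p; simp [Matrix.mulVec, dotProduct]

lemma smooth_mulVec_comp {π : (Fin n → ℝ) → Matrix (Fin n) (Fin n) ℝ}
    {u : (Fin n → ℝ) → (Fin n → ℝ)} (hs : SmoothBiv π) (hu : ContDiff ℝ (⊤ : ℕ∞) u) :
    ContDiff ℝ (⊤ : ℕ∞) fun p => π p *ᵥ u p := by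
  apply contDiff_pi.2; intro i
  rw [show (fun p => (π p *ᵥ u p) i) = fun p => ∑ k, π p i k * u p k from
    mulVec_comp_eq π u i]
  exact ContDiff.sum fun k _ => (hs i k).mul (contDiff_pi.1 hu k)

lemma smooth_gradf {F : (Fin n → ℝ) → ℝ} (hF : ContDiff ℝ (⊤ : ℕ∞) F) :
    ContDiff ℝ (⊤ : ℕ∞) (gradf F) := by
  apply contDiff_pi.2; intro i
  exact (hF.fderiv_right (by simp)).clm_apply contDiff_const

lemma diffAt_comp {u : (Fin n → ℝ) → (Fin n → ℝ)} (hu : ContDiff ℝ (⊤ : ℕ∞) u)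
    (k : Fin n) (m : Fin n → ℝ) : DifferentiableAt ℝ (fun p => u p k) m :=
  ((contDiff_pi.1 hu k).differentiable (by simp)).differentiableAt

lemma fderiv_apply_comp {u : (Fin n → ℝ) → (Fin n → ℝ)} (hu : ContDiff ℝ (⊤ : ℕ∞) u)
    (m w : Fin n → ℝ) (i : Fin n) :
    fderiv ℝ u m w i = fderiv ℝ (fun p => u p i) m w := by
  rw [show u = fun p i => u p i from rfl, fderiv_pi (fun j => diffAt_comp hu j m)]
  rfl

lemma fderiv_mulVec_comp {π : (Fin n → ℝ) → Matrix (Fin n) (Fin n) ℝ}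
    {u : (Fin n → ℝ) → (Fin n → ℝ)} (hs : SmoothBiv π) (hu : ContDiff ℝ (⊤ : ℕ∞) u)
    (m w : Fin n → ℝ) (i : Fin n) :
    fderiv ℝ (fun p => (π p *ᵥ u p) i) m w
      = ∑ k, (fderiv ℝ (fun p => π p i k) m w * u m k
          + π m i k * fderiv ℝ (fun p => u p k) m w) := by
  have hd : ∀ k, DifferentiableAt ℝ (fun p => π p i k) m := fun k =>
    ((hs i k).differentiable (by simp)).differentiableAt
  rw [mulVec_comp_eq π u i,
    fderiv_fun_sum (A := fun k p => π p i k * u p k) (fun k _ => ((hd k).mul (diffAt_comp hu k m)))]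
  simp only [ContinuousLinearMap.coe_sum', Finset.sum_apply]
  refine Finset.sum_congr rfl fun k _ => ?_
  rw [fderiv_fun_mul (hd k) (diffAt_comp hu k m)]
  simp only [ContinuousLinearMap.add_apply, ContinuousLinearMap.smul_apply, smul_eq_mul]
  ring

lemma gradf_coord (a : Fin n) (m : Fin n → ℝ) :
    gradf (fun p => p a) m = Pi.single a 1 := by
  funext k
  have : (fun p : Fin n → ℝ => p a) = (ContinuousLinearMap.proj a :
      (Fin n → ℝ) →L[ℝ] ℝ) := rfl
  simp only [gradf, this, ContinuousLinearMap.fderiv]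
  simp [Pi.single_apply, eq_comm]

end helpers

theorem foliated_iff_brackets_of_hamiltonians {n : ℕ}
    (π : (Fin n → ℝ) → Matrix (Fin n) (Fin n) ℝ)
    (hs : SmoothBiv π) (ha : AntiSymmBiv π) :
    Foliated π ↔
      ∀ F G : (Fin n → ℝ) → ℝ, ContDiff ℝ (⊤ : ℕ∞) F → ContDiff ℝ (⊤ : ℕ∞) G →
        ∃ α : (Fin n → ℝ) → (Fin n → ℝ), ContDiff ℝ (⊤ : ℕ∞) α ∧
          ∀ m, lieBracketVF (ham π F) (ham π G) m = π m *ᵥ α m := by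
  constructor
  · intro h F G hF hG
    obtain ⟨γ, hγ, hγ2⟩ := h (gradf F) (gradf G) (smooth_gradf hF) (smooth_gradf hG)
    exact ⟨γ, hγ, fun m => hγ2 m⟩
  · intro h α β hα hβ
    have hcoord : ∀ i : Fin n, ContDiff ℝ (⊤ : ℕ∞) (fun p : Fin n → ℝ => p i) :=
      fun i => contDiff_pi.1 contDiff_id i
    choose c hc hc2 using fun i j => h (fun p => p i) (fun p => p j) (hcoord i) (hcoord j)
    -- notation
    set A : (Fin n → ℝ) → (Fin n → ℝ) := fun p => π p *ᵥ α p with hA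
    set B : (Fin n → ℝ) → (Fin n → ℝ) := fun p => π p *ᵥ β p with hB
    have hAs : ContDiff ℝ (⊤ : ℕ∞) A := smooth_mulVec_comp hs hα
    have hBs : ContDiff ℝ (⊤ : ℕ∞) B := smooth_mulVec_comp hs hβ
    have hXa : ∀ a : Fin n, ham π (fun p => p a) = fun p i => π p i a := by
      intro a; funext p i
      simp [ham, gradf_coord, Matrix.mulVec_single]
    refine ⟨fun m => (∑ i, ∑ j, (α m i * β m j) • c i j m)
        + fderiv ℝ β m (A m) - fderiv ℝ α m (B m), ?_, ?_⟩
    · refine ContDiff.sub (ContDiff.add ?_ ?_) ?_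
      · exact ContDiff.sum fun i _ => ContDiff.sum fun j _ =>
          ((contDiff_pi.1 hα i).mul (contDiff_pi.1 hβ j)).smul (hc i j)
      · exact (hβ.fderiv_right (by simp)).clm_apply hAs
      · exact (hα.fderiv_right (by simp)).clm_apply hBs
    · intro m
      funext i
      -- expand both sides
      have hdπ : ∀ j k, DifferentiableAt ℝ (fun p => π p j k) m := fun j k =>
        ((hs j k).differentiable (by simp)).differentiableAt
      have hAm : A m = ∑ a, α m a • (fun i => π m i a) := by
        funext i'
        simp [hA, Matrix.mulVec, dotProduct, Finset.sum_apply, mul_comm]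
      have hBm : B m = ∑ a, β m a • (fun i => π m i a) := by
        funext i'
        simp [hB, Matrix.mulVec, dotProduct, Finset.sum_apply, mul_comm]
      have keyA : ∀ k, fderiv ℝ (fun p => π p i k) m (A m)
          = ∑ a, α m a * fderiv ℝ (fun p => π p i k) m (fun i' => π m i' a) := by
        intro k
        rw [hAm, map_sum]
        exact Finset.sum_congr rfl fun a _ => by rw [(fderiv ℝ (fun p => π p i k) m).map_smul]; rfl
      have keyB : ∀ k, fderiv ℝ (fun p => π p i k) m (B m)
          = ∑ a, β m a * fderiv ℝ (fun p => π p i k) m (fun i' => π m i' a) := by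
        intro k
        rw [hBm, map_sum]
        exact Finset.sum_congr rfl fun a _ => by rw [(fderiv ℝ (fun p => π p i k) m).map_smul]; rfl
      -- Lie bracket of coordinate hamiltonians
      have hbr : ∀ a b : Fin n, ∑ k, π m i k * c a b m k
          = fderiv ℝ (fun p => π p i b) m (fun i' => π m i' a)
            - fderiv ℝ (fun p => π p i a) m (fun i' => π m i' b) := by
        intro a b
        have h1 := congrFun (hc2 a b m) i
        rw [hXa a, hXa b] at h1
        have hXs : ∀ a : Fin n, ContDiff ℝ (⊤ : ℕ∞) (fun p i => π p i a) := by
          intro a; exact contDiff_pi.2 fun i => hs i a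
        have e1 : (π m *ᵥ c a b m) i = ∑ k, π m i k * c a b m k := by
          simp [Matrix.mulVec, dotProduct]
        rw [e1] at h1
        rw [← h1]
        simp only [lieBracketVF, Pi.sub_apply]
        rw [fderiv_apply_comp (hXs b) m _ i, fderiv_apply_comp (hXs a) m _ i]
      -- now expand LHS
      simp only [lieBracketVF, Pi.sub_apply]
      rw [fderiv_apply_comp hBs m (A m) i, fderiv_apply_comp hAs m (B m) i,
        fderiv_mulVec_comp hs hβ m (A m) i, fderiv_mulVec_comp hs hα m (B m) i]
      -- RHS
      have eR : (π m *ᵥ ((∑ i, ∑ j, (α m i * β m j) • c i j m)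
            + fderiv ℝ β m (A m) - fderiv ℝ α m (B m))) i
          = ∑ k, π m i k * ((∑ a, ∑ b, (α m a * β m b) * c a b m k)
            + fderiv ℝ (fun p => β p k) m (A m) - fderiv ℝ (fun p => α p k) m (B m)) := by
        simp only [Matrix.mulVec, dotProduct]
        refine Finset.sum_congr rfl fun k _ => ?_
        congr 1
        simp only [Pi.sub_apply, Pi.add_apply, Finset.sum_apply, Pi.smul_apply,
          smul_eq_mul]
        rw [fderiv_apply_comp hβ m (A m) k, fderiv_apply_comp hα m (B m) k]
      rw [eR]
      -- algebra
      simp only [mul_add, mul_sub, add_mul, Finset.sum_add_distrib, Finset.sum_sub_distrib,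
        Finset.mul_sum, keyA, keyB]
      have hfin : ∑ k, (∑ a, α m a * fderiv ℝ (fun p => π p i k) m (fun i' => π m i' a)) * β m k
          - ∑ k, (∑ a, β m a * fderiv ℝ (fun p => π p i k) m (fun i' => π m i' a)) * α m k
          = ∑ k, ∑ a, ∑ b, π m i k * (α m a * β m b * c a b m k) := by
        have key : ∀ a b : Fin n, ∑ k, π m i k * (α m a * β m b * c a b m k)
            = α m a * β m b * (fderiv ℝ (fun p => π p i b) m (fun i' => π m i' a)
              - fderiv ℝ (fun p => π p i a) m (fun i' => π m i' b)) := by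
          intro a b
          rw [← hbr a b, Finset.mul_sum]
          exact Finset.sum_congr rfl fun k _ => by ring
        have h1 : ∑ k, ∑ a, ∑ b, π m i k * (α m a * β m b * c a b m k)
            = ∑ a, ∑ b, α m a * β m b * (fderiv ℝ (fun p => π p i b) m (fun i' => π m i' a)
              - fderiv ℝ (fun p => π p i a) m (fun i' => π m i' b)) := by
          rw [Finset.sum_comm]
          refine Finset.sum_congr rfl fun a _ => ?_
          rw [Finset.sum_comm]
          exact Finset.sum_congr rfl fun b _ => key a b
        rw [h1]
        simp only [mul_sub, Finset.sum_sub_distrib]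
        congr 1
        · rw [show (∑ a, ∑ b, α m a * β m b
              * fderiv ℝ (fun p => π p i b) m (fun i' => π m i' a))
            = ∑ b, ∑ a, α m a * β m b
              * fderiv ℝ (fun p => π p i b) m (fun i' => π m i' a) from
            Finset.sum_comm ..]
          refine Finset.sum_congr rfl fun k _ => ?_
          rw [Finset.sum_mul]
          exact Finset.sum_congr rfl fun a _ => by ring
        · refine Finset.sum_congr rfl fun k _ => ?_
          rw [Finset.sum_mul]
          exact Finset.sum_congr rfl fun a _ => by ring
      linarith [hfin]
end

section
/- A foliated bivector field of rank two on a manifold M is a Poisson structure, i.e. if π is foliated and the rank of π_m^# is at most 2 at every point, then [π, π] = 0. -/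
open Matrix

section Aux

variable {n : ℕ}

lemma pd_neg (f : (Fin n → ℝ) → ℝ) (l : Fin n) (m : Fin n → ℝ) :
    pd (fun p => -f p) l m = -pd f l m := by
  unfold pd
  rw [fderiv_fun_neg]
  simp

lemma pd_antisymm {π : (Fin n → ℝ) → Matrix (Fin n) (Fin n) ℝ} (ha : AntiSymmBiv π)
    (a b l : Fin n) (m : Fin n → ℝ) :
    pd (fun p => π p a b) l m = -pd (fun p => π p b a) l m := by
  have h : (fun p => π p a b) = fun p => -(π p b a) := by
    funext p
    have := congrFun (congrFun (ha p) b) a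
    simpa [Matrix.transpose_apply] using this
  rw [h, pd_neg]

lemma schouten_cyclic (π : (Fin n → ℝ) → Matrix (Fin n) (Fin n) ℝ)
    (m : Fin n → ℝ) (i j k : Fin n) :
    schouten π m i j k = schouten π m j k i := by
  unfold schouten
  exact Finset.sum_congr rfl fun l _ => by ring

lemma schouten_swap {π : (Fin n → ℝ) → Matrix (Fin n) (Fin n) ℝ} (ha : AntiSymmBiv π)
    (m : Fin n → ℝ) (i j k : Fin n) :
    schouten π m j i k = -schouten π m i j k := by
  unfold schouten
  rw [← Finset.sum_neg_distrib]
  refine Finset.sum_congr rfl fun l _ => ?_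
  rw [pd_antisymm ha i k, pd_antisymm ha k j, pd_antisymm ha j i]
  ring

lemma schouten_diag1 {π : (Fin n → ℝ) → Matrix (Fin n) (Fin n) ℝ} (ha : AntiSymmBiv π)
    (m : Fin n → ℝ) (a b : Fin n) :
    schouten π m a a b = 0 := by
  have := schouten_swap ha m a a b
  linarith

lemma schouten_diag2 {π : (Fin n → ℝ) → Matrix (Fin n) (Fin n) ℝ} (ha : AntiSymmBiv π)
    (m : Fin n → ℝ) (a b : Fin n) :
    schouten π m a b b = 0 := by
  rw [schouten_cyclic]
  exact schouten_diag1 ha m b a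

lemma fderiv_apply_sum (f : (Fin n → ℝ) → ℝ) (m v : Fin n → ℝ) :
    fderiv ℝ f m v = ∑ l, v l * pd f l m := by
  have hv : v = ∑ l, v l • (Pi.single l 1 : Fin n → ℝ) := by
    funext a
    simp [Finset.sum_apply, Pi.single_apply]
  conv_lhs => rw [hv]
  rw [map_sum]
  simp [pd, smul_eq_mul]

lemma lieBracketVF_apply (X Y : (Fin n → ℝ) → (Fin n → ℝ)) (m : Fin n → ℝ) (k : Fin n)
    (hX : ∀ a, DifferentiableAt ℝ (fun p => X p a) m)
    (hY : ∀ a, DifferentiableAt ℝ (fun p => Y p a) m) :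
    lieBracketVF X Y m k =
      ∑ l, (X m l * pd (fun p => Y p k) l m - Y m l * pd (fun p => X p k) l m) := by
  have h1 : fderiv ℝ Y m = ContinuousLinearMap.pi fun a => fderiv ℝ (fun p => Y p a) m :=
    fderiv_pi hY
  have h2 : fderiv ℝ X m = ContinuousLinearMap.pi fun a => fderiv ℝ (fun p => X p a) m :=
    fderiv_pi hX
  show fderiv ℝ Y m (X m) k - fderiv ℝ X m (Y m) k = _
  rw [h1, h2]
  simp only [ContinuousLinearMap.pi_apply]
  rw [fderiv_apply_sum, fderiv_apply_sum, ← Finset.sum_sub_distrib]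

end Aux
lemma schouten_mem_range {n : ℕ} (π : (Fin n → ℝ) → Matrix (Fin n) (Fin n) ℝ)
    (hs : SmoothBiv π) (ha : AntiSymmBiv π) (hfol : Foliated π)
    (m : Fin n → ℝ) (i j : Fin n) :
    ∃ ξ : Fin n → ℝ, (fun k => schouten π m i j k) = π m *ᵥ ξ := by
  obtain ⟨γ, hγs, hγ⟩ := hfol (fun _ => Pi.single i 1) (fun _ => Pi.single j 1)
    contDiff_const contDiff_const
  set X : (Fin n → ℝ) → (Fin n → ℝ) := fun p => π p *ᵥ Pi.single i 1 with hXdef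
  set Y : (Fin n → ℝ) → (Fin n → ℝ) := fun p => π p *ᵥ Pi.single j 1 with hYdef
  have hdiff : ∀ a b, DifferentiableAt ℝ (fun p => π p a b) m :=
    fun a b => ((hs a b).differentiable (by simp)).differentiableAt
  have hXc : ∀ a, (fun p => X p a) = fun p => π p a i := by
    intro a; funext p; simp [hXdef]
  have hYc : ∀ a, (fun p => Y p a) = fun p => π p a j := by
    intro a; funext p; simp [hYdef]
  have hXd : ∀ a, DifferentiableAt ℝ (fun p => X p a) m := fun a => by
    rw [hXc a]; exact hdiff a i
  have hYd : ∀ a, DifferentiableAt ℝ (fun p => Y p a) m := fun a => by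
    rw [hYc a]; exact hdiff a j
  refine ⟨-(γ m) - gradf (fun p => π p i j) m, funext fun k => ?_⟩
  -- the lie bracket formula
  have e2 : lieBracketVF X Y m k =
      ∑ l, (π m l i * pd (fun p => π p k j) l m - π m l j * pd (fun p => π p k i) l m) := by
    rw [lieBracketVF_apply X Y m k hXd hYd]
    refine Finset.sum_congr rfl fun l _ => ?_
    rw [hXc k, hYc k]
    have hx : X m l = π m l i := by simp [hXdef]
    have hy : Y m l = π m l j := by simp [hYdef]
    rw [hx, hy]
  have e1 : (π m *ᵥ γ m) k = lieBracketVF X Y m k := (congrFun (hγ m) k).symm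
  have hmv : ∀ (w : Fin n → ℝ), (π m *ᵥ w) k = ∑ l, π m k l * w l := by
    intro w; simp [Matrix.mulVec, dotProduct]
  rw [hmv]
  have hgr : ∀ l : Fin n, gradf (fun p => π p i j) m l = pd (fun p => π p i j) l m := fun l => rfl
  have key : ∑ l, π m k l * (-(γ m) - gradf (fun p => π p i j) m) l
      = -(∑ l, π m k l * γ m l) - ∑ l, π m k l * pd (fun p => π p i j) l m := by
    rw [← Finset.sum_neg_distrib, ← Finset.sum_sub_distrib]
    refine Finset.sum_congr rfl fun l _ => ?_
    rw [← hgr l]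
    simp
    ring
  rw [key]
  have e3 : ∑ l, π m k l * γ m l = (π m *ᵥ γ m) k := (hmv (γ m)).symm
  rw [e3, e1, e2]
  unfold schouten
  rw [← Finset.sum_neg_distrib, ← Finset.sum_sub_distrib]
  refine Finset.sum_congr rfl fun l _ => ?_
  rw [pd_antisymm ha k j]
  have hπ : π m l k = -π m k l := by
    have := congrFun (congrFun (ha m) k) l
    simpa [Matrix.transpose_apply] using this
  rw [hπ]
  ring
theorem foliated_rank_two_is_poisson {n : ℕ}
    (π : (Fin n → ℝ) → Matrix (Fin n) (Fin n) ℝ)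
    (hs : SmoothBiv π) (ha : AntiSymmBiv π)
    (hfol : Foliated π)
    (hrank : ∀ m, (π m).rank ≤ 2) :
    ∀ m i j k, schouten π m i j k = 0 := by
  intro m i j k
  set V := LinearMap.range (π m).mulVecLin with hV
  have hfr : Module.finrank ℝ V ≤ 2 := hrank m
  obtain ⟨ξA, hA⟩ := schouten_mem_range π hs ha hfol m j k
  obtain ⟨ξB, hB⟩ := schouten_mem_range π hs ha hfol m k i
  obtain ⟨ξC, hC⟩ := schouten_mem_range π hs ha hfol m i j
  have mA : (fun l => schouten π m j k l) ∈ V :=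
    ⟨ξA, by simpa [Matrix.mulVecLin_apply] using hA.symm⟩
  have mB : (fun l => schouten π m k i l) ∈ V :=
    ⟨ξB, by simpa [Matrix.mulVecLin_apply] using hB.symm⟩
  have mC : (fun l => schouten π m i j l) ∈ V :=
    ⟨ξC, by simpa [Matrix.mulVecLin_apply] using hC.symm⟩
  set v : Fin 3 → V := ![⟨_, mA⟩, ⟨_, mB⟩, ⟨_, mC⟩] with hv
  have hdep : ¬ LinearIndependent ℝ v := by
    intro h
    have h3 := h.fintype_card_le_finrank
    simp only [Fintype.card_fin] at h3
    omega
  obtain ⟨g, hg0, i0, hi0⟩ := Fintype.not_linearIndependent_iff.mp hdep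
  have hg : ∀ l, g 0 * schouten π m j k l + g 1 * schouten π m k i l
      + g 2 * schouten π m i j l = 0 := by
    intro l
    have h0 := congrArg (fun x : V => (x : Fin n → ℝ) l) hg0
    simpa [hv, Fin.sum_univ_three, smul_eq_mul] using h0
  -- total antisymmetry facts
  have cyc1 : schouten π m i j k = schouten π m j k i := schouten_cyclic π m i j k
  have cyc2 : schouten π m j k i = schouten π m k i j := schouten_cyclic π m j k i
  fin_cases i0
  · -- g 0 ≠ 0
    have h := hg i
    rw [← cyc1, schouten_diag2 ha m k i,
      show schouten π m i j i = 0 from (schouten_cyclic π m i j i).trans (schouten_diag2 ha m j i)]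
      at h
    have : g 0 * schouten π m i j k = 0 := by linarith
    rcases mul_eq_zero.mp this with h' | h'
    · exact absurd h' hi0
    · exact h'
  · -- g 1 ≠ 0
    have h := hg j
    rw [show schouten π m j k j = 0 from (schouten_cyclic π m j k j).trans (schouten_diag2 ha m k j),
      ← cyc2, ← cyc1, schouten_diag2 ha m i j] at h
    have : g 1 * schouten π m i j k = 0 := by linarith
    rcases mul_eq_zero.mp this with h' | h'
    · exact absurd h' hi0
    · exact h'
  · -- g 2 ≠ 0
    have h := hg k
    rw [schouten_diag2 ha m j k,
      show schouten π m k i k = 0 from (schouten_cyclic π m k i k).trans (schouten_diag2 ha m i k)]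
      at h
    have : g 2 * schouten π m i j k = 0 := by linarith
    rcases mul_eq_zero.mp this with h' | h'
    · exact absurd h' hi0
    · exact h'
end

section
/- If π is a foliated bivector field on M and φ ∈ C^∞(M), then the bivector field φπ is foliated. Explicitly, writing X_F' = π^#(dF) and X_F = (φπ)^#(dF) = φ X_F', if [X_F', X_G'] = π^#(α'_{F,G}), then [X_F, X_G] = (φπ)^#(α_{F,G}) with α_{F,G} = φ α'_{F,G} + X_F'[φ] dG − X_G'[φ] dF. In particular, every conformally Poisson structure (a product of a smooth function and a Poisson bivector) is foliated. -/
open Matrix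

lemma contDiff_mulVec' {n : ℕ} {π : (Fin n → ℝ) → Matrix (Fin n) (Fin n) ℝ}
    (hs : SmoothBiv π) {α : (Fin n → ℝ) → (Fin n → ℝ)} (hα : ContDiff ℝ (⊤ : ℕ∞) α) :
    ContDiff ℝ (⊤ : ℕ∞) (fun m => π m *ᵥ α m) := by
  apply contDiff_pi.2
  intro i
  simp only [Matrix.mulVec, dotProduct]
  exact ContDiff.sum fun j _ => (hs i j).mul (contDiff_pi.1 hα j)

lemma contDiff_gradf' {n : ℕ} {F : (Fin n → ℝ) → ℝ} (hF : ContDiff ℝ (⊤ : ℕ∞) F) :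
    ContDiff ℝ (⊤ : ℕ∞) (gradf F) := by
  apply contDiff_pi.2
  intro i
  exact (hF.fderiv_right (by simp)).clm_apply contDiff_const

lemma key_bracket {n : ℕ} {φ : (Fin n → ℝ) → ℝ} {X Y : (Fin n → ℝ) → (Fin n → ℝ)}
    (hφ : ContDiff ℝ (⊤ : ℕ∞) φ) (m : Fin n → ℝ)
    (hX : DifferentiableAt ℝ X m) (hY : DifferentiableAt ℝ Y m) :
    lieBracketVF (fun p => φ p • X p) (fun p => φ p • Y p) m
      = (φ m * φ m) • lieBracketVF X Y m + (φ m * fderiv ℝ φ m (X m)) • Y m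
        - (φ m * fderiv ℝ φ m (Y m)) • X m := by
  have hφd : DifferentiableAt ℝ φ m := hφ.differentiable (by simp) m
  have hdY : fderiv ℝ (fun p => φ p • Y p) m = _ := (hφd.hasFDerivAt.smul hY.hasFDerivAt).fderiv
  have hdX : fderiv ℝ (fun p => φ p • X p) m = _ := (hφd.hasFDerivAt.smul hX.hasFDerivAt).fderiv
  simp only [lieBracketVF, hdX, hdY, ContinuousLinearMap.add_apply,
    ContinuousLinearMap.smul_apply, ContinuousLinearMap.smulRight_apply, _root_.map_smul,
    smul_smul]
  module

theorem conformal_multiple_of_foliated_is_foliated {n : ℕ}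
    (π : (Fin n → ℝ) → Matrix (Fin n) (Fin n) ℝ)
    (hs : SmoothBiv π) (ha : AntiSymmBiv π) (hfol : Foliated π)
    (φ : (Fin n → ℝ) → ℝ) (hφ : ContDiff ℝ (⊤ : ℕ∞) φ) :
    Foliated (fun m => φ m • π m) ∧
      ∀ (F G : (Fin n → ℝ) → ℝ) (α' : (Fin n → ℝ) → (Fin n → ℝ)),
        ContDiff ℝ (⊤ : ℕ∞) F → ContDiff ℝ (⊤ : ℕ∞) G → ContDiff ℝ (⊤ : ℕ∞) α' →
        (∀ m, lieBracketVF (ham π F) (ham π G) m = π m *ᵥ α' m) →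
        ∀ m, lieBracketVF (fun p => φ p • ham π F p) (fun p => φ p • ham π G p) m
          = (φ m • π m) *ᵥ (φ m • α' m
              + fderiv ℝ φ m (ham π F m) • gradf G m
              - fderiv ℝ φ m (ham π G m) • gradf F m) := by
  constructor
  · intro α β hα hβ
    obtain ⟨γ, hγs, hγ⟩ := hfol α β hα hβ
    refine ⟨fun m => φ m • γ m + fderiv ℝ φ m (π m *ᵥ α m) • β m
        - fderiv ℝ φ m (π m *ᵥ β m) • α m, ?_, ?_⟩
    · exact ((hφ.smul hγs).add
        (((hφ.fderiv_right (by simp)).clm_apply (contDiff_mulVec' hs hα)).smul hβ)).sub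
        (((hφ.fderiv_right (by simp)).clm_apply (contDiff_mulVec' hs hβ)).smul hα)
    · intro m
      have hXd : DifferentiableAt ℝ (fun p => π p *ᵥ α p) m :=
        (contDiff_mulVec' hs hα).differentiable (by simp) m
      have hYd : DifferentiableAt ℝ (fun p => π p *ᵥ β p) m :=
        (contDiff_mulVec' hs hβ).differentiable (by simp) m
      have e1 : (fun p => (φ p • π p) *ᵥ α p) = fun p => φ p • (π p *ᵥ α p) :=
        funext fun p => Matrix.smul_mulVec (φ p) (π p) (α p)
      have e2 : (fun p => (φ p • π p) *ᵥ β p) = fun p => φ p • (π p *ᵥ β p) :=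
        funext fun p => Matrix.smul_mulVec (φ p) (π p) (β p)
      rw [e1, e2, key_bracket hφ m hXd hYd, hγ m]
      simp only [Matrix.smul_mulVec, Matrix.mulVec_add, Matrix.mulVec_sub,
        Matrix.mulVec_smul]
      module
  · intro F G α' hF hG hα' hb m
    have hXd : DifferentiableAt ℝ (ham π F) m :=
      (contDiff_mulVec' hs (contDiff_gradf' hF)).differentiable (by simp) m
    have hYd : DifferentiableAt ℝ (ham π G) m :=
      (contDiff_mulVec' hs (contDiff_gradf' hG)).differentiable (by simp) m
    rw [key_bracket hφ m hXd hYd, hb m]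
    have hf : ham π F m = π m *ᵥ gradf F m := rfl
    have hg : ham π G m = π m *ᵥ gradf G m := rfl
    simp only [Matrix.smul_mulVec, Matrix.mulVec_add, Matrix.mulVec_sub,
      Matrix.mulVec_smul, hf, hg]
    module
end

section
/- For the bivector fields π_A = (x²+y²) ∂/∂x ∧ ∂/∂y and π_B = (x²+y²)² ∂/∂x ∧ ∂/∂y on ℝ², the images of (π_A^#)_m and (π_B^#)_m coincide at every point m, yet there exists no smooth 1-form β on ℝ² with π_B^#(β) = π_A^#(dx); hence pointwise inclusion of images does not imply inclusion of images as module maps on global sections. -/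
open Matrix

noncomputable def piA (m : Fin 2 → ℝ) : Matrix (Fin 2) (Fin 2) ℝ :=
  !![0, m 0 ^ 2 + m 1 ^ 2; -(m 0 ^ 2 + m 1 ^ 2), 0]

noncomputable def piB (m : Fin 2 → ℝ) : Matrix (Fin 2) (Fin 2) ℝ :=
  !![0, (m 0 ^ 2 + m 1 ^ 2) ^ 2; -((m 0 ^ 2 + m 1 ^ 2) ^ 2), 0]

theorem pointwise_image_eq_but_no_global_factorization :
    (∀ m : Fin 2 → ℝ,
      Set.range (fun ξ => piA m *ᵥ ξ) = Set.range (fun ξ => piB m *ᵥ ξ)) ∧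
    ¬ ∃ β : (Fin 2 → ℝ) → (Fin 2 → ℝ), ContDiff ℝ (⊤ : ℕ∞) β ∧
        ∀ m, piB m *ᵥ β m = piA m *ᵥ Pi.single 0 1 := by
  constructor
  · intro m
    ext v
    simp only [Set.mem_range]
    constructor
    · rintro ⟨ξ, rfl⟩
      by_cases hr : m 0 ^ 2 + m 1 ^ 2 = 0
      · exact ⟨ξ, by
          funext i; fin_cases i <;>
            simp [piA, piB, Matrix.mulVec, dotProduct, Fin.sum_univ_two, hr]⟩
      · refine ⟨(m 0 ^ 2 + m 1 ^ 2)⁻¹ • ξ, ?_⟩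
        funext i
        fin_cases i <;>
        · simp [piA, piB, Matrix.mulVec, dotProduct, Fin.sum_univ_two]
          field_simp <;>
          ring
    · rintro ⟨ξ, rfl⟩
      refine ⟨(m 0 ^ 2 + m 1 ^ 2) • ξ, ?_⟩
      funext i
      fin_cases i <;>
      · simp [piA, piB, Matrix.mulVec, dotProduct, Fin.sum_univ_two]
        ring
  · rintro ⟨β, hβ, h⟩
    have key : ∀ t : ℝ, t ≠ 0 → β ![t, 0] 0 = (t ^ 2)⁻¹ := by
      intro t ht
      have h1 := congrFun (h ![t, 0]) 1
      simp [piA, piB, Matrix.mulVec, dotProduct, Fin.sum_univ_two,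
        Pi.single_apply] at h1
      have ht2 : t ^ 2 ≠ 0 := pow_ne_zero _ ht
      have h2 : t ^ 2 * (β ![t, 0] 0 * t ^ 2 - 1) = 0 := by linear_combination h1
      rcases mul_eq_zero.mp h2 with h' | h'
      · exact absurd h' ht2
      · field_simp
        linarith
    have hc : Continuous fun m => β m 0 := (continuous_apply 0).comp hβ.continuous
    set a : ℕ → (Fin 2 → ℝ) := fun k => ![((k : ℝ) + 1)⁻¹, 0] with ha_def
    have ha : Filter.Tendsto a Filter.atTop (nhds ![0, 0]) := by
      rw [tendsto_pi_nhds]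
      intro i
      fin_cases i
      · simpa [ha_def, one_div] using (tendsto_one_div_add_atTop_nhds_zero_nat :
          Filter.Tendsto (fun n : ℕ => 1 / ((n : ℝ) + 1)) Filter.atTop (nhds 0))
      · simp [ha_def]
    have h2 : Filter.Tendsto (fun k => β (a k) 0) Filter.atTop (nhds (β ![0, 0] 0)) :=
      (hc.tendsto _).comp ha
    have heq : (fun k : ℕ => β (a k) 0) = fun k : ℕ => ((k : ℝ) + 1) ^ 2 := by
      funext k
      have hk : ((k : ℝ) + 1) ≠ 0 := by positivity
      have h' : β (a k) 0 = ((((k : ℝ) + 1)⁻¹) ^ 2)⁻¹ := key _ (inv_ne_zero hk)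
      rw [h', ← inv_pow, inv_inv]
    rw [heq] at h2
    have h3 : Filter.Tendsto (fun k : ℕ => ((k : ℝ) + 1) ^ 2) Filter.atTop Filter.atTop :=
      (Filter.tendsto_pow_atTop two_ne_zero).comp
        (Filter.tendsto_atTop_add_const_right _ _ tendsto_natCast_atTop_atTop)
    exact not_tendsto_atTop_of_tendsto_nhds h2 h3
end

section
/- If π is a foliated bivector field on a manifold M, then for every H ∈ C^∞(M) there exists a (1,1)-tensor field C_H : TM → TM such that (L_{X_H} π)^# = C_H ∘ π^#. -/
open Matrix

theorem foliated_gives_one_one_tensor {n : ℕ}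
    (π : (Fin n → ℝ) → Matrix (Fin n) (Fin n) ℝ)
    (hs : SmoothBiv π) (ha : AntiSymmBiv π) (hfol : Foliated π) :
    ∀ H : (Fin n → ℝ) → ℝ, ContDiff ℝ (⊤ : ℕ∞) H →
      ∃ C : (Fin n → ℝ) → Matrix (Fin n) (Fin n) ℝ,
        (∀ i j, ContDiff ℝ (⊤ : ℕ∞) fun m => C m i j) ∧
        ∀ m, lieDerivBiv (ham π H) π m = C m * π m := by
  intro H hH
  set X := ham π H with hXdef
  -- gradient of H is smooth
  have hgrad : ContDiff ℝ (⊤:ℕ∞) (gradf H) := by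
    apply contDiff_pi.2
    intro i
    exact (hH.fderiv_right (by simp)).clm_apply contDiff_const
  -- components of X are smooth
  have hXi : ∀ i, ContDiff ℝ (⊤:ℕ∞) (fun m => X m i) := by
    intro i
    have h : (fun m => X m i) = fun m => ∑ k, π m i k * gradf H m k := by
      funext m; simp [hXdef, ham, Matrix.mulVec, dotProduct]
    rw [h]
    exact ContDiff.sum fun k _ => (hs i k).mul ((contDiff_pi.1 hgrad) k)
  -- jacobian entries smooth
  have hJ : ∀ i l, ContDiff ℝ (⊤:ℕ∞) (fun m => jacobianM X m i l) := by
    intro i l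
    exact ((hXi i).fderiv_right (by simp)).clm_apply contDiff_const
  -- foliated applied to gradf H and constant basis covectors
  have hfo : ∀ j : Fin n, ∃ γ : (Fin n → ℝ) → (Fin n → ℝ), ContDiff ℝ (⊤:ℕ∞) γ ∧
      ∀ m, lieBracketVF X (fun p => π p *ᵥ Pi.single j 1) m = π m *ᵥ γ m := by
    intro j
    exact hfol (gradf H) (fun _ => Pi.single j 1) hgrad contDiff_const
  choose γ hγs hγ using hfo
  -- helper: vector field Y_j component
  have hYcomp : ∀ (j : Fin n), (fun p => (π p *ᵥ Pi.single j 1)) = fun p i => π p i j := by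
    intro j; funext p i
    simp [Matrix.mulVec_single]
  -- pointwise: fderiv of componentwise
  have hpi : ∀ (f : (Fin n → ℝ) → (Fin n → ℝ)) (m : Fin n → ℝ),
      (∀ i, DifferentiableAt ℝ (fun p => f p i) m) →
      ∀ (v : Fin n → ℝ) (i : Fin n), fderiv ℝ f m v i = fderiv ℝ (fun p => f p i) m v := by
    intro f m h v i; rw [fderiv_pi h]; rfl
  have hexp : ∀ (f : (Fin n → ℝ) → ℝ) (m v : Fin n → ℝ),
      fderiv ℝ f m v = ∑ l, v l * fderiv ℝ f m (Pi.single l 1) := by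
    intro f m v
    conv_lhs => rw [show v = ∑ l, v l • (Pi.single l 1 : Fin n → ℝ) by
      funext k; simp [Pi.single_apply, Finset.sum_apply]]
    rw [map_sum]; simp [smul_eq_mul]
  -- define D
  set D : (Fin n → ℝ) → Matrix (Fin n) (Fin n) ℝ :=
    fun m => Matrix.of fun i j => γ j m i - (jacobianM X m)ᵀ i j with hD
  -- key: Lπ = π * D pointwise
  have key : ∀ m, lieDerivBiv X π m = π m * D m := by
    intro m
    ext i j
    have hbr := congrFun (hγ j m) i
    -- compute bracket component
    have hb1 : fderiv ℝ (fun p => π p *ᵥ Pi.single j 1) m (X m) i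
        = fderiv ℝ (fun p => π p i j) m (X m) := by
      rw [hYcomp j]
      rw [hpi _ m (fun i => ((hs i j).differentiable (by simp)).differentiableAt)]
    have hb2 : fderiv ℝ X m ((fun p => π p *ᵥ Pi.single j 1) m) i
        = (jacobianM X m * π m) i j := by
      rw [hpi X m (fun i => ((hXi i).differentiable (by simp)).differentiableAt)]
      rw [hexp]
      simp only [Matrix.mul_apply, jacobianM, Matrix.of_apply, Matrix.mulVec_single, mul_one]
      exact Finset.sum_congr rfl (fun l _ => by simp [mul_comm])
    have hbr' : fderiv ℝ (fun p => π p i j) m (X m) - (jacobianM X m * π m) i j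
        = (π m *ᵥ γ j m) i := by
      rw [← hb1, ← hb2, ← hbr]; simp [lieBracketVF]
    have hrhs : (π m * D m) i j = (π m *ᵥ γ j m) i - (π m * (jacobianM X m)ᵀ) i j := by
      simp only [hD, Matrix.mul_apply, Matrix.of_apply, Matrix.mulVec, dotProduct,
        mul_sub, Finset.sum_sub_distrib]
    simp only [lieDerivBiv, Matrix.sub_apply, Matrix.of_apply, hrhs, ← hbr']
  -- antisymmetry of the Lie derivative
  have hanti : ∀ m, (lieDerivBiv X π m)ᵀ = - lieDerivBiv X π m := by
    intro m
    have hπ : ∀ i j : Fin n, (fun p => π p j i) = (fun p => -(π p i j)) := by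
      intro i j; funext p
      have := congrFun (congrFun (ha p) i) j
      simpa [Matrix.transpose_apply] using this
    set F : Matrix (Fin n) (Fin n) ℝ :=
      Matrix.of fun i j => fderiv ℝ (fun p => π p i j) m (X m) with hFdef
    set J : Matrix (Fin n) (Fin n) ℝ := jacobianM X m with hJdef
    have hF : Fᵀ = -F := by
      ext i j
      simp only [hFdef, Matrix.transpose_apply, Matrix.of_apply, Matrix.neg_apply]
      rw [hπ i j, fderiv_fun_neg]
      simp
    show (F - J * π m - π m * Jᵀ)ᵀ = -(F - J * π m - π m * Jᵀ)
    rw [Matrix.transpose_sub, Matrix.transpose_sub, Matrix.transpose_mul,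
      Matrix.transpose_mul, Matrix.transpose_transpose, hF, ha m]
    simp only [Matrix.neg_mul, Matrix.mul_neg]
    abel
  -- conclude
  refine ⟨fun m => (D m)ᵀ, ?_, ?_⟩
  · intro i j
    have h : (fun m => (D m)ᵀ i j) = fun m => γ i m j - jacobianM X m i j := by
      funext m; simp [hD, Matrix.transpose_apply]
    rw [h]
    exact (((contDiff_pi.1 (hγs i)) j)).sub (hJ i j)
  · intro m
    have h1 := key m
    have h2 := hanti m
    calc lieDerivBiv X π m = -(lieDerivBiv X π m)ᵀ := by rw [h2, neg_neg]
      _ = -((π m * D m)ᵀ) := by rw [h1]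
      _ = -((D m)ᵀ * (π m)ᵀ) := by rw [Matrix.transpose_mul]
      _ = -((D m)ᵀ * (-π m)) := by rw [ha m]
      _ = (D m)ᵀ * π m := by rw [Matrix.mul_neg, neg_neg]
end

section
/- On M = ℝ⁴ with coordinates (x, y, u, v), the bivector field π = x ∂/∂x ∧ ∂/∂u + (x²+y²) ∂/∂y ∧ ∂/∂v is weakly foliated but not foliated: at each point with (x,y) ≠ (0,0), [π^#(du), π^#(dv)] = π^#(β) for the unique 1-form β = (2x²/(x²+y²)) dv, which does not extend smoothly to points with (x,y) = (0,0), yet at every point m the bracket [π^#(α), π^#(β)]|_m lies in Im(π_m^#). -/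
open Matrix

noncomputable def pi10 (m : Fin 4 → ℝ) : Matrix (Fin 4) (Fin 4) ℝ :=
  !![0, 0, m 0, 0;
     0, 0, 0, m 0 ^ 2 + m 1 ^ 2;
     -(m 0), 0, 0, 0;
     0, -(m 0 ^ 2 + m 1 ^ 2), 0, 0]

noncomputable def beta10 (m : Fin 4 → ℝ) : Fin 4 → ℝ :=
  fun i => if i = 3 then 2 * m 0 ^ 2 / (m 0 ^ 2 + m 1 ^ 2) else 0

set_option linter.unnecessarySeqFocus false

noncomputable def Xc (α : (Fin 4 → ℝ) → (Fin 4 → ℝ)) : (Fin 4 → ℝ) → (Fin 4 → ℝ) :=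
  fun p => ![p 0 * α p 2, (p 0 ^ 2 + p 1 ^ 2) * α p 3,
             -(p 0 * α p 0), -((p 0 ^ 2 + p 1 ^ 2) * α p 1)]

lemma Xc_eq (α : (Fin 4 → ℝ) → (Fin 4 → ℝ)) :
    (fun p => pi10 p *ᵥ α p) = Xc α := by
  funext p
  funext i
  fin_cases i <;>
    simp [pi10, Xc, Matrix.mulVec, dotProduct, Fin.sum_univ_four] <;> ring

lemma proj_eq (i : Fin 4) :
    (fun p : Fin 4 → ℝ => p i) = (ContinuousLinearMap.proj i : (Fin 4 → ℝ) →L[ℝ] ℝ) := rfl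

lemma diff_proj (i : Fin 4) : Differentiable ℝ (fun p : Fin 4 → ℝ => p i) := by
  rw [proj_eq]; exact (ContinuousLinearMap.proj i : (Fin 4 → ℝ) →L[ℝ] ℝ).differentiable

lemma fderiv_proj (i : Fin 4) (m v : Fin 4 → ℝ) :
    fderiv ℝ (fun p : Fin 4 → ℝ => p i) m v = v i := by
  rw [proj_eq, (ContinuousLinearMap.proj i : (Fin 4 → ℝ) →L[ℝ] ℝ).fderiv]; rfl

lemma diff_comp {α : (Fin 4 → ℝ) → (Fin 4 → ℝ)} (hα : ContDiff ℝ (⊤ : ℕ∞) α) (i : Fin 4) :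
    Differentiable ℝ (fun p => α p i) := fun m =>
  differentiableAt_pi.mp (hα.differentiable (by simp) m) i

lemma diff_s : Differentiable ℝ (fun p : Fin 4 → ℝ => p 0 ^ 2 + p 1 ^ 2) :=
  ((diff_proj 0).pow 2).add ((diff_proj 1).pow 2)

lemma fderiv_apply_comp_s10 {f : (Fin 4 → ℝ) → (Fin 4 → ℝ)} {m : Fin 4 → ℝ}
    (hf : DifferentiableAt ℝ f m) (v : Fin 4 → ℝ) (i : Fin 4) :
    fderiv ℝ f m v i = fderiv ℝ (fun p => f p i) m v := by
  have h : (fun p => f p i) = (ContinuousLinearMap.proj i : (Fin 4 → ℝ) →L[ℝ] ℝ) ∘ f := rfl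
  rw [h,
    ((ContinuousLinearMap.proj i : (Fin 4 → ℝ) →L[ℝ] ℝ).hasFDerivAt.comp m
      hf.hasFDerivAt).fderiv]
  rfl

lemma diff_Xc {α : (Fin 4 → ℝ) → (Fin 4 → ℝ)} (hα : ContDiff ℝ (⊤ : ℕ∞) α) (m : Fin 4 → ℝ) :
    DifferentiableAt ℝ (Xc α) m := by
  rw [differentiableAt_pi]
  intro i
  fin_cases i <;>
    simp only [Xc, Matrix.cons_val_zero, Matrix.cons_val_one, Matrix.head_cons,
      Matrix.cons_val_two, Matrix.tail_cons, Matrix.cons_val_three, Fin.isValue]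
  · exact ((diff_proj 0).mul (diff_comp hα 2)) m
  · exact (diff_s.mul (diff_comp hα 3)) m
  · exact (((diff_proj 0).mul (diff_comp hα 0)) m).neg
  · exact ((diff_s.mul (diff_comp hα 1)) m).neg

lemma fd_mul_proj0 {α : (Fin 4 → ℝ) → (Fin 4 → ℝ)} (hα : ContDiff ℝ (⊤ : ℕ∞) α)
    (j : Fin 4) (m v : Fin 4 → ℝ) :
    fderiv ℝ (fun p => p 0 * α p j) m v
      = m 0 * fderiv ℝ (fun p => α p j) m v + α m j * v 0 := by
  rw [fderiv_fun_mul ((diff_proj 0) m) ((diff_comp hα j) m)]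
  simp [fderiv_proj]

lemma bracket02 {α β : (Fin 4 → ℝ) → (Fin 4 → ℝ)} (hα : ContDiff ℝ (⊤ : ℕ∞) α)
    (hβ : ContDiff ℝ (⊤ : ℕ∞) β) (m : Fin 4 → ℝ) (h0 : m 0 = 0) :
    lieBracketVF (Xc α) (Xc β) m 0 = 0 ∧ lieBracketVF (Xc α) (Xc β) m 2 = 0 := by
  have hXm0 : Xc α m 0 = 0 := by simp [Xc, h0]
  have hYm0 : Xc β m 0 = 0 := by simp [Xc, h0]
  have e0 : ∀ γ : (Fin 4 → ℝ) → (Fin 4 → ℝ), (fun p => Xc γ p 0) = fun p => p 0 * γ p 2 := by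
    intro γ; funext p; simp [Xc]
  have e2 : ∀ γ : (Fin 4 → ℝ) → (Fin 4 → ℝ), (fun p => Xc γ p 2) = fun p => -(p 0 * γ p 0) := by
    intro γ; funext p; simp [Xc]
  constructor
  · show (fderiv ℝ (Xc β) m (Xc α m) - fderiv ℝ (Xc α) m (Xc β m)) 0 = 0
    rw [Pi.sub_apply, fderiv_apply_comp_s10 (diff_Xc hβ m) _ 0,
      fderiv_apply_comp_s10 (diff_Xc hα m) _ 0, e0 β, e0 α,
      fd_mul_proj0 hβ 2 m, fd_mul_proj0 hα 2 m, h0, hXm0, hYm0]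
    ring
  · show (fderiv ℝ (Xc β) m (Xc α m) - fderiv ℝ (Xc α) m (Xc β m)) 2 = 0
    rw [Pi.sub_apply, fderiv_apply_comp_s10 (diff_Xc hβ m) _ 2,
      fderiv_apply_comp_s10 (diff_Xc hα m) _ 2, e2 β, e2 α, fderiv_fun_neg, fderiv_fun_neg]
    simp only [ContinuousLinearMap.neg_apply]
    rw [fd_mul_proj0 hβ 0 m, fd_mul_proj0 hα 0 m, h0, hXm0, hYm0]
    ring

lemma wf : WeaklyFoliated pi10 := by
  intro α β hα hβ m
  rw [Xc_eq α, Xc_eq β]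
  set w := lieBracketVF (Xc α) (Xc β) m with hw
  by_cases h0 : m 0 = 0
  · by_cases h1 : m 1 = 0
    · refine ⟨0, ?_⟩
      have hX : Xc α m = 0 := by
        funext i; fin_cases i <;> simp [Xc, h0, h1]
      have hY : Xc β m = 0 := by
        funext i; fin_cases i <;> simp [Xc, h0, h1]
      show lieBracketVF (Xc α) (Xc β) m = _
      unfold lieBracketVF
      rw [hX, hY]
      simp [Matrix.mulVec_zero]
    · obtain ⟨hb0, hb2⟩ := bracket02 hα hβ m h0
      refine ⟨![0, -(w 3) / m 1 ^ 2, 0, w 1 / m 1 ^ 2], ?_⟩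
      funext i
      fin_cases i
      · show w 0 = _
        rw [hw, hb0]
        simp [pi10, Matrix.mulVec, dotProduct, Fin.sum_univ_four, h0]
      · show w 1 = _
        simp [pi10, Matrix.mulVec, dotProduct, Fin.sum_univ_four, h0]
        field_simp
      · show w 2 = _
        rw [hw, hb2]
        simp [pi10, Matrix.mulVec, dotProduct, Fin.sum_univ_four, h0]
      · show w 3 = _
        simp [pi10, Matrix.mulVec, dotProduct, Fin.sum_univ_four, h0]
        field_simp
  · have hs : m 0 ^ 2 + m 1 ^ 2 ≠ 0 := by positivity
    refine ⟨![-(w 2) / m 0, -(w 3) / (m 0 ^ 2 + m 1 ^ 2), w 0 / m 0,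
      w 1 / (m 0 ^ 2 + m 1 ^ 2)], ?_⟩
    funext i
    fin_cases i <;>
      · show w _ = _
        simp [pi10, Matrix.mulVec, dotProduct, Fin.sum_univ_four]
        field_simp
        try ring

lemma col2_eq : (fun p : Fin 4 → ℝ => pi10 p *ᵥ Pi.single 2 1)
    = fun p => ![p 0, 0, 0, 0] := by
  funext p
  funext i
  fin_cases i <;>
    simp [pi10, Matrix.mulVec, dotProduct, Fin.sum_univ_four, Pi.single_apply]

lemma col3_eq : (fun p : Fin 4 → ℝ => pi10 p *ᵥ Pi.single 3 1)
    = fun p => ![0, p 0 ^ 2 + p 1 ^ 2, 0, 0] := by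
  funext p
  funext i
  fin_cases i <;>
    simp [pi10, Matrix.mulVec, dotProduct, Fin.sum_univ_four, Pi.single_apply]

lemma diff_col2 (m : Fin 4 → ℝ) :
    DifferentiableAt ℝ (fun p : Fin 4 → ℝ => ![p 0, 0, 0, 0]) m := by
  rw [differentiableAt_pi]
  intro i
  fin_cases i <;>
    simp only [Matrix.cons_val_zero, Matrix.cons_val_one, Matrix.head_cons,
      Matrix.cons_val_two, Matrix.tail_cons, Matrix.cons_val_three, Fin.isValue]
  · exact (diff_proj 0) m
  all_goals exact differentiableAt_const 0

lemma diff_col3 (m : Fin 4 → ℝ) :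
    DifferentiableAt ℝ (fun p : Fin 4 → ℝ => ![0, p 0 ^ 2 + p 1 ^ 2, 0, 0]) m := by
  rw [differentiableAt_pi]
  intro i
  fin_cases i <;>
    simp only [Matrix.cons_val_zero, Matrix.cons_val_one, Matrix.head_cons,
      Matrix.cons_val_two, Matrix.tail_cons, Matrix.cons_val_three, Fin.isValue]
  · exact differentiableAt_const 0
  · exact diff_s m
  all_goals exact differentiableAt_const 0

lemma fd_s (m v : Fin 4 → ℝ) :
    fderiv ℝ (fun p : Fin 4 → ℝ => p 0 ^ 2 + p 1 ^ 2) m v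
      = 2 * m 0 * v 0 + 2 * m 1 * v 1 := by
  have e : (fun p : Fin 4 → ℝ => p 0 ^ 2 + p 1 ^ 2)
      = fun p => p 0 * p 0 + p 1 * p 1 := by
    funext p; ring
  rw [e, fderiv_fun_add (((diff_proj 0).fun_mul (diff_proj 0)) m) (((diff_proj 1).fun_mul (diff_proj 1)) m),
    ContinuousLinearMap.add_apply, fderiv_fun_mul ((diff_proj 0) m) ((diff_proj 0) m),
    fderiv_fun_mul ((diff_proj 1) m) ((diff_proj 1) m)]
  simp [fderiv_proj]
  ring

lemma bracket_cols (m : Fin 4 → ℝ) :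
    lieBracketVF (fun p => pi10 p *ᵥ Pi.single 2 1) (fun p => pi10 p *ᵥ Pi.single 3 1) m
      = ![0, 2 * m 0 ^ 2, 0, 0] := by
  rw [col2_eq, col3_eq]
  unfold lieBracketVF
  funext i
  rw [Pi.sub_apply, fderiv_apply_comp_s10 (diff_col3 m) _ i, fderiv_apply_comp_s10 (diff_col2 m) _ i]
  fin_cases i
  · show fderiv ℝ (fun p : Fin 4 → ℝ => (0:ℝ)) m _ - fderiv ℝ (fun p : Fin 4 → ℝ => p 0) m _ = _
    rw [fderiv_fun_const, fderiv_proj]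
    simp
  · show fderiv ℝ (fun p : Fin 4 → ℝ => p 0 ^ 2 + p 1 ^ 2) m _
        - fderiv ℝ (fun p : Fin 4 → ℝ => (0:ℝ)) m _ = _
    rw [fd_s, fderiv_fun_const]
    simp
    ring
  · show fderiv ℝ (fun p : Fin 4 → ℝ => (0:ℝ)) m _
        - fderiv ℝ (fun p : Fin 4 → ℝ => (0:ℝ)) m _ = _
    rw [fderiv_fun_const]
    simp
  · show fderiv ℝ (fun p : Fin 4 → ℝ => (0:ℝ)) m _
        - fderiv ℝ (fun p : Fin 4 → ℝ => (0:ℝ)) m _ = _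
    rw [fderiv_fun_const]
    simp

open Filter Topology

lemma part3 (m : Fin 4 → ℝ) (h : m 0 ≠ 0 ∨ m 1 ≠ 0) :
    lieBracketVF (fun p => pi10 p *ᵥ Pi.single 2 1) (fun p => pi10 p *ᵥ Pi.single 3 1) m
      = pi10 m *ᵥ beta10 m := by
  have hs : m 0 ^ 2 + m 1 ^ 2 ≠ 0 := by rcases h with h | h <;> positivity
  rw [bracket_cols]
  funext i
  fin_cases i <;>
    simp [pi10, beta10, Matrix.mulVec, dotProduct, Fin.sum_univ_four]
  field_simp

lemma part4 (m : Fin 4 → ℝ) (hm : m 0 ≠ 0) (ξ : Fin 4 → ℝ)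
    (hξ : lieBracketVF (fun p => pi10 p *ᵥ Pi.single 2 1)
      (fun p => pi10 p *ᵥ Pi.single 3 1) m = pi10 m *ᵥ ξ) :
    ξ = beta10 m := by
  have hs : m 0 ^ 2 + m 1 ^ 2 ≠ 0 := by positivity
  rw [bracket_cols] at hξ
  have h0 := congrFun hξ 0
  have h1 := congrFun hξ 1
  have h2 := congrFun hξ 2
  have h3 := congrFun hξ 3
  simp [pi10, Matrix.mulVec, dotProduct, Fin.sum_univ_four] at h0 h1 h2 h3
  funext i
  fin_cases i <;> simp [beta10]
  · -- ξ 0 = 0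
    rcases h2 with h | h
    · exact absurd h hm
    · exact h
  · -- ξ 1 = 0
    rcases h3 with h | h
    · exfalso; apply hs; linarith
    · exact h
  · rcases h0 with h | h
    · exact absurd h hm
    · exact h
  · rw [eq_div_iff hs]
    linarith [h1]

lemma not_fol : ¬ Foliated pi10 := by
  intro h
  obtain ⟨γ, hγs, hγ⟩ := h (fun _ => Pi.single 2 1) (fun _ => Pi.single 3 1)
    contDiff_const contDiff_const
  have key : ∀ m : Fin 4 → ℝ, (![0, 2 * m 0 ^ 2, 0, 0] : Fin 4 → ℝ) = pi10 m *ᵥ γ m :=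
    fun m => (bracket_cols m) ▸ (hγ m)
  have hg2 : ∀ t : ℝ, t ≠ 0 → γ ![t, 0, 0, 0] 3 = 2 := by
    intro t ht
    have h1 := congrFun (key ![t, 0, 0, 0]) 1
    simp [pi10, Matrix.mulVec, dotProduct, Fin.sum_univ_four] at h1
    exact mul_left_cancel₀ (pow_ne_zero 2 ht)
      (h1.symm.trans (by ring : 2 * t ^ 2 = t ^ 2 * 2))
  have hg0 : ∀ t : ℝ, t ≠ 0 → γ ![0, t, 0, 0] 3 = 0 := by
    intro t ht
    have h1 := congrFun (key ![0, t, 0, 0]) 1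
    simp [pi10, Matrix.mulVec, dotProduct, Fin.sum_univ_four] at h1
    rcases h1 with h | h
    · exact absurd h ht
    · exact h
  have hcont : Continuous γ := hγs.continuous
  have hc1 : Continuous fun t : ℝ => γ ![t, 0, 0, 0] 3 := by
    have hm : Continuous fun t : ℝ => (![t, 0, 0, 0] : Fin 4 → ℝ) := by
      apply continuous_pi
      intro i
      fin_cases i
      · exact continuous_id
      all_goals exact continuous_const
    exact (continuous_apply 3).comp (hcont.comp hm)
  have hc2 : Continuous fun t : ℝ => γ ![0, t, 0, 0] 3 := by
    have hm : Continuous fun t : ℝ => (![0, t, 0, 0] : Fin 4 → ℝ) := by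
      apply continuous_pi
      intro i
      fin_cases i
      · exact continuous_const
      · exact continuous_id
      all_goals exact continuous_const
    exact (continuous_apply 3).comp (hcont.comp hm)
  have e1 : Tendsto (fun t : ℝ => γ ![t, 0, 0, 0] 3) (𝓝[≠] (0:ℝ))
      (𝓝 (γ ![0, 0, 0, 0] 3)) :=
    (hc1.tendsto 0).mono_left nhdsWithin_le_nhds
  have e2 : Tendsto (fun t : ℝ => γ ![t, 0, 0, 0] 3) (𝓝[≠] (0:ℝ)) (𝓝 2) := by
    refine Tendsto.congr' ?_ tendsto_const_nhds
    filter_upwards [self_mem_nhdsWithin] with t ht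
    exact (hg2 t ht).symm
  have f1 : Tendsto (fun t : ℝ => γ ![0, t, 0, 0] 3) (𝓝[≠] (0:ℝ))
      (𝓝 (γ ![0, 0, 0, 0] 3)) :=
    (hc2.tendsto 0).mono_left nhdsWithin_le_nhds
  have f2 : Tendsto (fun t : ℝ => γ ![0, t, 0, 0] 3) (𝓝[≠] (0:ℝ)) (𝓝 0) := by
    refine Tendsto.congr' ?_ tendsto_const_nhds
    filter_upwards [self_mem_nhdsWithin] with t ht
    exact (hg0 t ht).symm
  have ha : γ ![0, 0, 0, 0] 3 = 2 := tendsto_nhds_unique e1 e2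
  have hb : γ ![0, 0, 0, 0] 3 = 0 := tendsto_nhds_unique f1 f2
  rw [ha] at hb
  norm_num at hb

theorem weakly_foliated_not_foliated_example :
    WeaklyFoliated pi10 ∧ ¬ Foliated pi10 ∧
    (∀ m : Fin 4 → ℝ, (m 0 ≠ 0 ∨ m 1 ≠ 0) →
      lieBracketVF (fun p => pi10 p *ᵥ Pi.single 2 1) (fun p => pi10 p *ᵥ Pi.single 3 1) m
        = pi10 m *ᵥ beta10 m) ∧
    (∀ m : Fin 4 → ℝ, m 0 ≠ 0 → ∀ ξ : Fin 4 → ℝ,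
      lieBracketVF (fun p => pi10 p *ᵥ Pi.single 2 1) (fun p => pi10 p *ᵥ Pi.single 3 1) m
        = pi10 m *ᵥ ξ → ξ = beta10 m) :=
  ⟨wf, not_fol, part3, part4⟩
end

section
/- Let M be a manifold with a connection ∇ on TM with torsion Tor^∇, and X a vector field on M with flow φ_t. A smooth path b : [0,1] → TM whose base path is an integral curve of X is a tangent integral curve of X (i.e. b(t) = Tφ_t(b(0))) if and only if ∇_{ẋ} b = ∇_b X + Tor^∇(X, b) along the base path x(t). -/
open Matrix

section TICAux

open Set Metric Real Filter

variable {E : Type*} [NormedAddCommGroup E] [NormedSpace ℝ E] [CompleteSpace E] [ProperSpace E]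


/-- Global uniqueness of integral curves of a locally Lipschitz vector field. -/
theorem TIC_ode_unique (X : E → E) (hX : LocallyLipschitz X) (f g : ℝ → E)
    (hf : ∀ t, HasDerivAt f (X (f t)) t) (hg : ∀ t, HasDerivAt g (X (g t)) t)
    (h0 : f 0 = g 0) : ∀ t, f t = g t := by
  have hcf : Continuous f := continuous_iff_continuousAt.2 fun t => (hf t).continuousAt
  have hcg : Continuous g := continuous_iff_continuousAt.2 fun t => (hg t).continuousAt
  set S : Set ℝ := {t | f t = g t} with hS
  have hclosed : IsClosed S := isClosed_eq hcf hcg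
  have hopen : IsOpen S := by
    rw [isOpen_iff_mem_nhds]
    intro t₁ ht₁
    obtain ⟨K, s, hs, hlip⟩ := hX (f t₁)
    have ht₁' : f t₁ = g t₁ := ht₁
    have h1 : ∀ᶠ t in nhds t₁, f t ∈ s := hcf.continuousAt.preimage_mem_nhds hs
    have h2 : ∀ᶠ t in nhds t₁, g t ∈ s :=
      hcg.continuousAt.preimage_mem_nhds (by rwa [ht₁'] at hs)
    have hfs : ∀ᶠ t in nhds t₁, HasDerivAt f (X (f t)) t ∧ f t ∈ s :=
      h1.mono fun t ht => ⟨hf t, ht⟩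
    have hgs : ∀ᶠ t in nhds t₁, HasDerivAt g (X (g t)) t ∧ g t ∈ s :=
      h2.mono fun t ht => ⟨hg t, ht⟩
    exact ODE_solution_unique_of_eventually (v := fun _ => X) (s := fun _ => s)
      (Filter.Eventually.of_forall fun _ => hlip) hfs hgs ht₁'
  have huniv : S = univ := IsClopen.eq_univ ⟨hclosed, hopen⟩ ⟨0, h0⟩
  intro t; have ht : t ∈ S := huniv ▸ mem_univ t; exact ht

theorem TIC_escape (X : E → E) (φ : ℝ → E → E)
    (hφflow : ∀ t m, HasDerivAt (fun s => φ s m) (X (φ t m)) t)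
    (hφ0 : ∀ m, φ 0 m = m)
    {p : E} {r M : ℝ} (hM : 0 ≤ M) (hXb : ∀ y ∈ closedBall p r, ‖X y‖ ≤ M)
    {y : E} (hy : y ∈ closedBall p (r/2)) :
    ∀ s ∈ Icc (0:ℝ) (r/(2*(M+1))), φ s y ∈ closedBall p r := by
  have hM1 : (0:ℝ) < M + 1 := by linarith
  set δ := r/(2*(M+1)) with hδ
  have hyp : dist y p ≤ r / 2 := mem_closedBall.1 hy
  have hr0 : 0 ≤ r := by nlinarith [dist_nonneg (x := y) (y := p)]
  have hMδ : (M+1) * δ = r / 2 := by rw [hδ]; field_simp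
  have key : ∀ s ∈ Icc (0:ℝ) δ, ‖φ s y - p‖ ≤ r/2 + (M+1) * s := by
    apply image_norm_le_of_norm_deriv_right_lt_deriv_boundary
      (f := fun s => φ s y - p) (f' := fun s => X (φ s y))
      (B := fun s => r/2 + (M+1)*s) (B' := fun _ => M+1)
    · exact (Continuous.sub (continuous_iff_continuousAt.2 fun t => (hφflow t y).continuousAt)
        continuous_const).continuousOn
    · exact fun s _ => ((hφflow s y).sub_const p).hasDerivWithinAt
    · rw [hφ0, mul_zero, add_zero, ← dist_eq_norm]; exact hyp
    · intro s
      simpa using ((hasDerivAt_id s).const_mul (M+1)).const_add (r/2)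
    · intro s hs heq
      have hmem : φ s y ∈ closedBall p r := by
        rw [mem_closedBall, dist_eq_norm, heq]
        have : (M+1) * s ≤ (M+1) * δ := by
          apply mul_le_mul_of_nonneg_left hs.2.le hM1.le
        rw [hMδ] at this; linarith
      calc ‖X (φ s y)‖ ≤ M := hXb _ hmem
        _ < M + 1 := by linarith
  intro s hs
  have := key s hs
  rw [mem_closedBall, dist_eq_norm]
  have h2 : (M+1) * s ≤ (M+1) * δ := mul_le_mul_of_nonneg_left hs.2 hM1.le
  rw [hMδ] at h2
  linarith

set_option maxHeartbeats 1000000 in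
theorem TIC_crux_right (X : E → E) (hX : ContDiff ℝ (⊤:ℕ∞) X)
    (φ : ℝ → E → E) (hφ0 : ∀ m, φ 0 m = m)
    (hφflow : ∀ t m, HasDerivAt (fun s => φ s m) (X (φ t m)) t)
    (hφsm : ∀ t, ContDiff ℝ (⊤:ℕ∞) (φ t)) (p v : E) :
    HasDerivWithinAt (fun h => fderiv ℝ (φ h) p v) (fderiv ℝ X p v) (Ici 0) 0 := by
  classical
  have h1T : (1 : WithTop ℕ∞) ≤ ((⊤:ℕ∞) : WithTop ℕ∞) := by exact_mod_cast (le_top : (1:ℕ∞) ≤ ⊤)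
  have hXd : Differentiable ℝ X := hX.differentiable (by simp)
  set D : E →L[ℝ] E := fderiv ℝ X p with hD
  have hDc : Continuous fun y => fderiv ℝ X y := hX.continuous_fderiv (by simp)
  obtain ⟨K, s0, hs0, hlip0⟩ := (hX.of_le h1T).locallyLipschitz p
  obtain ⟨R₀, hR₀, hsub⟩ := Metric.nhds_basis_closedBall.mem_iff.1 hs0
  have hlip : LipschitzOnWith K X (closedBall p R₀) := hlip0.mono hsub
  obtain ⟨M, hMb⟩ := (isCompact_closedBall p R₀).exists_bound_of_continuousOn
    (hX.continuous.continuousOn (s := closedBall p R₀))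
  set M' := max M 0 with hM'
  have hM'0 : 0 ≤ M' := le_max_right _ _
  have hMb' : ∀ y ∈ closedBall p R₀, ‖X y‖ ≤ M' := fun y hy => (hMb y hy).trans (le_max_left _ _)
  set C : ℝ := Real.exp K with hC
  have hC1 : 1 ≤ C := by
    rw [hC]; simpa using Real.exp_le_exp.2 (K.coe_nonneg)
  have hφ0' : φ 0 = id := funext hφ0
  have hXc : Continuous X := hX.continuous
  have key : ∀ ε > (0:ℝ), ∃ δ > (0:ℝ), ∀ h : ℝ, 0 < h → h ≤ δ →
      ‖fderiv ℝ (φ h) p v - v - h • (D v)‖ ≤ ε * (h * ‖v‖) := by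
    intro ε hε
    have hC0 : (0:ℝ) < C := lt_of_lt_of_le one_pos hC1
    set ε₁ := ε / (2*C) with hε₁
    have hε₁0 : 0 < ε₁ := by positivity
    obtain ⟨ρ₀, hρ₀, hρball⟩ := Metric.continuousAt_iff.1 hDc.continuousAt ε₁ hε₁0
    set ρ := ρ₀ / 2 with hρdef
    have hρ : 0 < ρ := by positivity
    have hρbound : ∀ ξ ∈ closedBall p ρ, ‖fderiv ℝ X ξ - D‖ ≤ ε₁ := by
      intro ξ hξ
      have : dist ξ p < ρ₀ := lt_of_le_of_lt (mem_closedBall.1 hξ) (by linarith)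
      have := hρball this
      rw [dist_eq_norm] at this
      exact this.le
    set r := min ρ R₀ with hrdef
    have hr : 0 < r := lt_min hρ hR₀
    have hrρ : r ≤ ρ := min_le_left _ _
    have hrR : r ≤ R₀ := min_le_right _ _
    set δf : ℝ := min (min (r/(2*(M'+1))) 1) (ε/(2*(‖D‖*K*C+1))) with hδf
    have hδf0 : 0 < δf := by
      apply lt_min (lt_min (by positivity) one_pos)
      positivity
    refine ⟨δf, hδf0, ?_⟩
    intro h hh0 hhδ
    have hh1 : h ≤ 1 := hhδ.trans ((min_le_left _ _).trans (min_le_right _ _))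
    have hhr : h ≤ r/(2*(M'+1)) := hhδ.trans ((min_le_left _ _).trans (min_le_left _ _))
    have hhε : h ≤ ε/(2*(‖D‖*K*C+1)) := hhδ.trans (min_le_right _ _)
    -- escape
    have hXb' : ∀ y ∈ closedBall p r, ‖X y‖ ≤ M' := fun y hy =>
      hMb' y (closedBall_subset_closedBall hrR hy)
    have hesc : ∀ y ∈ closedBall p (r/2), ∀ s ∈ Icc (0:ℝ) h, φ s y ∈ closedBall p r := by
      intro y hy s hs
      exact TIC_escape X φ hφflow hφ0 hM'0 hXb' hy s ⟨hs.1, hs.2.trans hhr⟩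
    have hpball : p ∈ closedBall p (r/2) := mem_closedBall_self (by positivity)
    -- gronwall
    have hgr : ∀ y ∈ closedBall p (r/2), ∀ s ∈ Icc (0:ℝ) h,
        dist (φ s y) (φ s p) ≤ ‖y - p‖ * C := by
      intro y hy s hs
      have := dist_le_of_trajectories_ODE_of_mem (v := fun _ => X)
        (s := fun _ => closedBall p r) (K := K) (a := 0) (b := h)
        (f := fun s => φ s y) (g := fun s => φ s p)
        (fun _ _ => hlip.mono (closedBall_subset_closedBall hrR))
        (continuous_iff_continuousAt.2 fun t => (hφflow t y).continuousAt).continuousOn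
        (fun t _ => (hφflow t y).hasDerivWithinAt)
        (fun t ht => hesc y hy t ⟨ht.1, ht.2.le⟩)
        (continuous_iff_continuousAt.2 fun t => (hφflow t p).continuousAt).continuousOn
        (fun t _ => (hφflow t p).hasDerivWithinAt)
        (fun t ht => hesc p hpball t ⟨ht.1, ht.2.le⟩)
        (δ := dist y p) (le_of_eq (by show dist (φ 0 y) (φ 0 p) = dist y p; rw [hφ0, hφ0])) s hs
      refine this.trans ?_
      rw [dist_eq_norm]
      apply mul_le_mul_of_nonneg_left _ (norm_nonneg _)
      rw [hC]
      apply Real.exp_le_exp.2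
      have hK0 : (0:ℝ) ≤ K := K.coe_nonneg
      have : s - 0 ≤ 1 := by linarith [hs.2, hh1]
      nlinarith [hs.1]
    -- integral identity
    have hcont : ∀ y : E, Continuous fun u => X (φ u y) := fun y =>
      hXc.comp (continuous_iff_continuousAt.2 fun t => (hφflow t y).continuousAt)
    have hint : ∀ y : E, ∀ s : ℝ, φ s y - y = ∫ u in (0:ℝ)..s, X (φ u y) := by
      intro y s
      have := intervalIntegral.integral_eq_sub_of_hasDerivAt
        (f := fun u => φ u y) (f' := fun u => X (φ u y))
        (fun u _ => hφflow u y) ((hcont y).intervalIntegrable 0 s)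
      rw [this]; simp [hφ0]
    -- estimate A
    have hA : ∀ y ∈ closedBall p (r/2), ∀ s ∈ Icc (0:ℝ) h,
        ‖φ s y - φ s p - (y - p)‖ ≤ h * (K * (C * ‖y - p‖)) := by
      intro y hy s hs
      have hid : φ s y - φ s p - (y - p)
          = ∫ u in (0:ℝ)..s, (X (φ u y) - X (φ u p)) := by
        rw [intervalIntegral.integral_sub ((hcont y).intervalIntegrable 0 s)
          ((hcont p).intervalIntegrable 0 s), ← hint y s, ← hint p s]
        abel
      rw [hid]
      have hb : ∀ u ∈ Set.uIoc (0:ℝ) s, ‖X (φ u y) - X (φ u p)‖ ≤ K * (C * ‖y - p‖) := by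
        intro u hu
        have huIcc : u ∈ Icc (0:ℝ) h := by
          rw [uIoc_of_le hs.1] at hu
          exact ⟨hu.1.le, hu.2.trans hs.2⟩
        have h1 := hesc y hy u huIcc
        have h2 := hesc p hpball u huIcc
        have hd := hlip.dist_le_mul _ (closedBall_subset_closedBall hrR h1)
          _ (closedBall_subset_closedBall hrR h2)
        rw [← dist_eq_norm]
        refine hd.trans ?_
        exact mul_le_mul_of_nonneg_left ((hgr y hy u huIcc).trans_eq (mul_comm _ _)) K.coe_nonneg
      have hnn : (0:ℝ) ≤ ↑K * (C * ‖y - p‖) := by positivity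
      have := intervalIntegral.norm_integral_le_of_norm_le_const hb
      refine this.trans ?_
      rw [sub_zero, abs_of_nonneg hs.1]
      calc ↑K * (C * ‖y - p‖) * s ≤ ↑K * (C * ‖y - p‖) * h :=
            mul_le_mul_of_nonneg_left hs.2 hnn
        _ = h * (↑K * (C * ‖y - p‖)) := by ring
    -- main estimate
    have hmain : ∀ y ∈ closedBall p (r/2),
        ‖(φ h y - y - h • D y) - (φ h p - p - h • D p)‖
          ≤ (h * (ε₁*C + ‖D‖*(K * (C * h)))) * ‖y - p‖ := by
      intro y hy
      have hDconst : (∫ _ in (0:ℝ)..h, D (y - p)) = h • D (y - p) := by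
        rw [intervalIntegral.integral_const, sub_zero]
      have hid : (φ h y - y - h • D y) - (φ h p - p - h • D p)
          = ∫ u in (0:ℝ)..h, (X (φ u y) - X (φ u p) - D (y - p)) := by
        rw [intervalIntegral.integral_sub (((hcont y).intervalIntegrable 0 h).sub
          ((hcont p).intervalIntegrable 0 h)) (intervalIntegrable_const),
          intervalIntegral.integral_sub ((hcont y).intervalIntegrable 0 h)
          ((hcont p).intervalIntegrable 0 h), hDconst, ← hint y h, ← hint p h,
          map_sub, smul_sub]
        abel
      rw [hid]
      have hb : ∀ u ∈ Set.uIoc (0:ℝ) h, ‖X (φ u y) - X (φ u p) - D (y - p)‖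
          ≤ ε₁ * C * ‖y - p‖ + ‖D‖*(K * (C * h)) * ‖y - p‖ := by
        intro u hu
        have huIcc : u ∈ Icc (0:ℝ) h := by
          rw [uIoc_of_le hh0.le] at hu
          exact ⟨hu.1.le, hu.2⟩
        have h1 := hesc y hy u huIcc
        have h2 := hesc p hpball u huIcc
        have tri : ‖X (φ u y) - X (φ u p) - D (y - p)‖
            ≤ ‖X (φ u y) - X (φ u p) - D (φ u y - φ u p)‖
              + ‖D (φ u y - φ u p - (y - p))‖ := by
          have : X (φ u y) - X (φ u p) - D (y - p)
              = (X (φ u y) - X (φ u p) - D (φ u y - φ u p))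
                + D (φ u y - φ u p - (y - p)) := by
            simp only [map_sub]
            abel
          rw [this]
          exact norm_add_le _ _
        refine tri.trans (add_le_add ?_ ?_)
        · have := Convex.norm_image_sub_le_of_norm_fderiv_le'
            (f := X) (φ := D) (C := ε₁) (s := closedBall p r)
            (fun ξ _ => hXd.differentiableAt)
            (fun ξ hξ => hρbound ξ (closedBall_subset_closedBall hrρ hξ))
            (convex_closedBall p r) h2 h1
          refine this.trans ?_
          have h4 := hgr y hy u huIcc
          rw [dist_eq_norm] at h4
          calc ε₁ * ‖φ u y - φ u p‖ ≤ ε₁ * (‖y - p‖ * C) :=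
                mul_le_mul_of_nonneg_left h4 hε₁0.le
            _ = ε₁ * C * ‖y - p‖ := by ring
        · refine (D.le_opNorm _).trans ?_
          calc ‖D‖ * ‖φ u y - φ u p - (y - p)‖
              ≤ ‖D‖ * (h * (↑K * (C * ‖y - p‖))) :=
                mul_le_mul_of_nonneg_left (hA y hy u huIcc) (norm_nonneg D)
            _ = ‖D‖*(↑K * (C * h)) * ‖y - p‖ := by ring
      have := intervalIntegral.norm_integral_le_of_norm_le_const hb
      refine this.trans (le_of_eq ?_)
      rw [sub_zero, abs_of_nonneg hh0.le]
      ring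
    -- derivative bound
    set F := fderiv ℝ (φ h) p with hF
    have hGder : HasFDerivAt (fun w => φ h w - w - h • D w)
        (F - ContinuousLinearMap.id ℝ E - h • D) p := by
      exact ((((hφsm h).differentiable (by simp)) p).hasFDerivAt.sub (hasFDerivAt_id p)).sub
        ((D.hasFDerivAt).const_smul h)
    have hcle : (0:ℝ) ≤ h * (ε₁*C + ‖D‖*(K * (C * h))) := by positivity
    have hnorm : ‖F - ContinuousLinearMap.id ℝ E - h • D‖
        ≤ h * (ε₁*C + ‖D‖*(K * (C * h))) := by
      apply hGder.le_of_lip' hcle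
      filter_upwards [closedBall_mem_nhds p (by positivity : (0:ℝ) < r/2)] with y hy
      exact hmain y hy
    have happ : (F - ContinuousLinearMap.id ℝ E - h • D) v = F v - v - h • D v := by
      simp
    have hineq : ‖F v - v - h • D v‖ ≤ (h * (ε₁*C + ‖D‖*(K * (C * h)))) * ‖v‖ := by
      rw [← happ]
      exact ((F - ContinuousLinearMap.id ℝ E - h • D).le_opNorm v).trans
        (mul_le_mul_of_nonneg_right hnorm (norm_nonneg v))
    refine hineq.trans ?_
    have hε₁C : ε₁ * C = ε / 2 := by
      rw [hε₁, div_mul_eq_mul_div, mul_comm ε C, mul_comm (2:ℝ) C,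
        mul_div_mul_left _ _ (ne_of_gt hC0)]
    have hsecond : ‖D‖*(K * (C * h)) ≤ ε/2 := by
      have h1 : ‖D‖*(K * C) * h ≤ (‖D‖*K*C+1) * h := by
        nlinarith [hh0.le, norm_nonneg D, K.coe_nonneg, hC0.le]
      have h2 : (‖D‖*K*C+1) * h ≤ (‖D‖*K*C+1) * (ε/(2*(‖D‖*K*C+1))) := by
        apply mul_le_mul_of_nonneg_left hhε
        positivity
      have hane : (‖D‖*↑K*C+1) ≠ (0:ℝ) := by positivity
      have h3 : (‖D‖*↑K*C+1) * (ε/(2*(‖D‖*↑K*C+1))) = ε/2 := by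
        rw [mul_div_assoc', mul_comm (2:ℝ) (‖D‖*↑K*C+1), mul_div_mul_left _ _ hane]
      have h0 : ‖D‖*(↑K*(C*h)) = ‖D‖*(↑K*C)*h := by ring
      linarith [h0, h1, h2, h3]
    have hsum : ε₁*C + ‖D‖*(K * (C * h)) ≤ ε := by
      rw [hε₁C]; linarith [hsecond]
    calc h * (ε₁*C + ‖D‖*(K * (C * h))) * ‖v‖
        ≤ h * ε * ‖v‖ :=
          mul_le_mul_of_nonneg_right (mul_le_mul_of_nonneg_left hsum hh0.le) (norm_nonneg v)
      _ = ε * (h * ‖v‖) := by ring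
  -- conclude
  have hf0 : fderiv ℝ (φ 0) p v = v := by
    rw [hφ0', fderiv_id]; rfl
  rw [hasDerivWithinAt_iff_tendsto_slope, Set.Ici_sdiff_left,
    Metric.tendsto_nhdsWithin_nhds]
  intro ε' hε'
  have hv1 : (0:ℝ) < ‖v‖ + 1 := by positivity
  set ε'' := ε' / (2 * (‖v‖ + 1)) with hε''
  have hε''0 : 0 < ε'' := by positivity
  obtain ⟨δ, hδ0, hkey⟩ := key ε'' hε''0
  refine ⟨δ, hδ0, ?_⟩
  intro h hh hdist
  have hh0 : (0:ℝ) < h := hh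
  have hhδ : h ≤ δ := by
    rw [Real.dist_eq, sub_zero, abs_of_pos hh0] at hdist
    exact hdist.le
  have hb := hkey h hh0 hhδ
  have heq : slope (fun s => fderiv ℝ (φ s) p v) 0 h - D v
      = h⁻¹ • (fderiv ℝ (φ h) p v - v - h • D v) := by
    have hsl : slope (fun s => fderiv ℝ (φ s) p v) 0 h
        = h⁻¹ • (fderiv ℝ (φ h) p v - v) := by
      simp only [slope, vsub_eq_sub, sub_zero, hf0]
    rw [hsl, smul_sub, smul_sub, smul_smul, inv_mul_cancel₀ (ne_of_gt hh0), one_smul,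
      smul_sub]
  rw [dist_eq_norm, heq, norm_smul, norm_inv, Real.norm_eq_abs, abs_of_pos hh0]
  have hstep : h⁻¹ * ‖fderiv ℝ (φ h) p v - v - h • D v‖ ≤ h⁻¹ * (ε'' * (h * ‖v‖)) :=
    mul_le_mul_of_nonneg_left hb (inv_nonneg.2 hh0.le)
  have hcomp : h⁻¹ * (ε'' * (h * ‖v‖)) = ε'' * ‖v‖ := by
    field_simp
  have hhalf : ε'' * (‖v‖ + 1) = ε' / 2 := by
    rw [hε'', div_mul_eq_mul_div, mul_comm ε' (‖v‖+1), mul_comm (2:ℝ) (‖v‖+1),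
      mul_div_mul_left _ _ (ne_of_gt hv1)]
  have hfin : ε'' * ‖v‖ < ε' := by nlinarith [hε''0, norm_nonneg v, hε']
  calc h⁻¹ * ‖fderiv ℝ (φ h) p v - v - h • D v‖
      ≤ ε'' * ‖v‖ := by rw [← hcomp]; exact hstep
    _ < ε' := hfin

theorem TIC_crux (X : E → E) (hX : ContDiff ℝ (⊤:ℕ∞) X)
    (φ : ℝ → E → E) (hφ0 : ∀ m, φ 0 m = m)
    (hφflow : ∀ t m, HasDerivAt (fun s => φ s m) (X (φ t m)) t)
    (hφsm : ∀ t, ContDiff ℝ (⊤:ℕ∞) (φ t)) (p v : E) :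
    HasDerivAt (fun h => fderiv ℝ (φ h) p v) (fderiv ℝ X p v) 0 := by
  have hpos := TIC_crux_right X hX φ hφ0 hφflow hφsm p v
  set ψ : ℝ → E → E := fun t m => φ (-t) m with hψ
  have hψ0 : ∀ m, ψ 0 m = m := by intro m; simp [hψ, hφ0]
  have hψflow : ∀ t m, HasDerivAt (fun s => ψ s m) ((fun m => -X m) (ψ t m)) t := by
    intro t m
    have h1 : HasDerivAt (fun u => φ u m) (X (φ (-t) m)) (-t) := hφflow (-t) m
    have h2 : HasDerivAt (fun s : ℝ => -s) (-1 : ℝ) t := (hasDerivAt_id t).neg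
    have := h1.scomp t h2
    simpa [Function.comp_def] using this
  have hψsm : ∀ t, ContDiff ℝ (⊤:ℕ∞) (ψ t) := fun t => hφsm (-t)
  have hXneg : ContDiff ℝ (⊤:ℕ∞) (fun m => -X m) := hX.neg
  have hneg0 := TIC_crux_right (fun m => -X m) hXneg ψ hψ0 hψflow hψsm p v
  have hfneg : fderiv ℝ (fun m => -X m) p v = -(fderiv ℝ X p v) := by
    rw [fderiv_fun_neg]; rfl
  rw [hfneg] at hneg0
  have hneg : HasDerivWithinAt (fun h => fderiv ℝ (φ h) p v) (fderiv ℝ X p v) (Iic 0) 0 := by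
    have hmaps : Set.MapsTo (fun s : ℝ => -s) (Iic 0) (Ici 0) := fun s hs => by
      simp only [mem_Ici]; simp only [mem_Iic] at hs; linarith
    have hinner : HasDerivWithinAt (fun s : ℝ => -s) (-1 : ℝ) (Iic 0) 0 :=
      ((hasDerivAt_id (0:ℝ)).neg).hasDerivWithinAt
    have hcomp := HasDerivWithinAt.scomp (0:ℝ)
      (by simpa using hneg0) hinner hmaps
    have hfe : ((fun h => fderiv ℝ (ψ h) p v) ∘ fun s : ℝ => -s)
        = fun h => fderiv ℝ (φ h) p v := by
      funext h
      simp [hψ, Function.comp]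
    rw [hfe] at hcomp
    simpa using hcomp
  have := hneg.union hpos
  rwa [Iic_union_Ici, hasDerivWithinAt_univ] at this

theorem TIC_group (X : E → E) (hX : LocallyLipschitz X) (φ : ℝ → E → E)
    (hφ0 : ∀ m, φ 0 m = m)
    (hφflow : ∀ t m, HasDerivAt (fun s => φ s m) (X (φ t m)) t) :
    ∀ t s m, φ (t + s) m = φ s (φ t m) := by
  intro t s m
  have hf : ∀ u, HasDerivAt (fun u => φ (t + u) m) (X (φ (t + u) m)) u := by
    intro u
    have h1 := hφflow (t + u) m
    have h2 : HasDerivAt (fun w : ℝ => t + w) (1:ℝ) u := by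
      simpa using (hasDerivAt_id u).const_add t
    simpa [Function.comp_def] using h1.scomp u h2
  exact TIC_ode_unique X hX (fun u => φ (t + u) m) (fun u => φ u (φ t m))
    hf (fun u => hφflow u (φ t m)) (by show φ (t+0) m = φ 0 (φ t m); rw [add_zero, hφ0]) s

theorem TIC_linear_unique (A : ℝ → E →L[ℝ] E) (hA : Continuous A)
    (f g : ℝ → E) (hf : ∀ t, HasDerivAt f (A t (f t)) t)
    (hg : ∀ t, HasDerivAt g (A t (g t)) t) (h0 : f 0 = g 0) : ∀ t, f t = g t := by
  intro T
  set a : ℝ := -(|T| + 1) with ha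
  set bb : ℝ := |T| + 1 with hbb
  have haT : a < 0 := by have := abs_nonneg T; rw [ha]; linarith
  have hbT : (0:ℝ) < bb := by have := abs_nonneg T; rw [hbb]; linarith
  have hTmem : T ∈ Icc a bb := ⟨by have := neg_abs_le T; rw [ha]; linarith,
    by have := le_abs_self T; rw [hbb]; linarith⟩
  set cl : ℝ → ℝ := fun s => max a (min s bb) with hcl
  have hclc : Continuous cl := continuous_const.max (continuous_id.min continuous_const)
  have hclmem : ∀ s, cl s ∈ Icc a bb := by
    intro s
    constructor
    · exact le_max_left _ _
    · have h1 : min s bb ≤ bb := min_le_right _ _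
      have h2 : a ≤ bb := by linarith
      rw [hcl]; simp only [max_le_iff]; exact ⟨h2, h1⟩
  have hcleq : ∀ s ∈ Icc a bb, cl s = s := by
    intro s hs
    rw [hcl]
    simp only [min_eq_left hs.2, max_eq_right hs.1]
  obtain ⟨KK, hKK⟩ := (isCompact_Icc (a := a) (b := bb)).exists_bound_of_continuousOn
    hA.continuousOn
  set K' : NNReal := Real.toNNReal KK with hK'
  have hlipA : ∀ s : ℝ, LipschitzWith K' (fun y => A (cl s) y) := by
    intro s
    apply LipschitzWith.weaken ((A (cl s)).lipschitz)
    have h1 : ‖A (cl s)‖ ≤ KK := hKK _ (hclmem s)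
    calc ‖A (cl s)‖₊ = ‖A (cl s)‖.toNNReal := norm_toNNReal.symm
      _ ≤ Real.toNNReal KK := Real.toNNReal_mono h1
  have := ODE_solution_unique_of_mem_Icc (v := fun s y => A (cl s) y)
    (s := fun _ => univ) (K := K')
    (fun s _ => (hlipA s).lipschitzOnWith)
    (t₀ := 0) (a := a) (b := bb) ⟨haT, hbT⟩
    (continuous_iff_continuousAt.2 fun t => (hf t).continuousAt).continuousOn
    (fun s hs => by
      show HasDerivAt f (A (cl s) (f s)) s
      rw [hcleq s (Ioo_subset_Icc_self hs)]; exact hf s)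
    (fun _ _ => mem_univ _)
    (continuous_iff_continuousAt.2 fun t => (hg t).continuousAt).continuousOn
    (fun s hs => by
      show HasDerivAt g (A (cl s) (g s)) s
      rw [hcleq s (Ioo_subset_Icc_self hs)]; exact hg s)
    (fun _ _ => mem_univ _) h0
  exact this hTmem

theorem TIC_c_hasDerivAt (X : E → E) (hX : ContDiff ℝ (⊤:ℕ∞) X)
    (φ : ℝ → E → E) (hφ0 : ∀ m, φ 0 m = m)
    (hφflow : ∀ t m, HasDerivAt (fun s => φ s m) (X (φ t m)) t)
    (hφsm : ∀ t, ContDiff ℝ (⊤:ℕ∞) (φ t))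
    (x : ℝ → E) (hx : ∀ t, HasDerivAt x (X (x t)) t) (b0 : E) (t : ℝ) :
    HasDerivAt (fun s => fderiv ℝ (φ s) (x 0) b0)
      (fderiv ℝ X (x t) (fderiv ℝ (φ t) (x 0) b0)) t := by
  have h1T : (1 : WithTop ℕ∞) ≤ ((⊤:ℕ∞) : WithTop ℕ∞) := by
    exact_mod_cast (le_top : (1:ℕ∞) ≤ ⊤)
  have hlip : LocallyLipschitz X := (hX.of_le h1T).locallyLipschitz
  have hxφ : ∀ s, x s = φ s (x 0) :=
    TIC_ode_unique X hlip x (fun s => φ s (x 0)) hx (fun s => hφflow s (x 0))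
      (by show x 0 = φ 0 (x 0); rw [hφ0])
  set c : ℝ → E := fun s => fderiv ℝ (φ s) (x 0) b0 with hc
  have hkey : ∀ s, c s = fderiv ℝ (φ (s - t)) (x t) (c t) := by
    intro s
    have hgroup : φ s = fun m => φ (s - t) (φ t m) := by
      funext m
      rw [← TIC_group X hlip φ hφ0 hφflow t (s - t) m, add_sub_cancel]
    have hcomp : fderiv ℝ (φ s) (x 0) =
        (fderiv ℝ (φ (s - t)) (φ t (x 0))).comp (fderiv ℝ (φ t) (x 0)) := by
      rw [hgroup]
      exact fderiv_comp (x 0) (((hφsm (s-t)).differentiable (by simp)) _)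
        (((hφsm t)).differentiable (by simp) _)
    show fderiv ℝ (φ s) (x 0) b0 = _
    rw [hcomp, ← hxφ t]
    rfl
  have houter := TIC_crux X hX φ hφ0 hφflow hφsm (x t) (c t)
  have hinner : HasDerivAt (fun s : ℝ => s - t) (1:ℝ) t := by
    simpa using (hasDerivAt_id t).sub_const t
  have hcomp := HasDerivAt.scomp_of_eq t houter hinner (sub_self t).symm
  have hfe : ((fun h => fderiv ℝ (φ h) (x t) (c t)) ∘ fun s : ℝ => s - t) = c := by
    funext s
    exact (hkey s).symm
  rw [hfe] at hcomp
  simpa using hcomp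


end TICAux

theorem tangent_integral_curve_iff {n : ℕ}
    (X : (Fin n → ℝ) → (Fin n → ℝ)) (hX : ContDiff ℝ (⊤ : ℕ∞) X)
    (φ : ℝ → (Fin n → ℝ) → (Fin n → ℝ))
    (hφ0 : ∀ m, φ 0 m = m)
    (hφflow : ∀ t m, HasDerivAt (fun s => φ s m) (X (φ t m)) t)
    (hφsm : ∀ t, ContDiff ℝ (⊤ : ℕ∞) (φ t))
    (Γ : (Fin n → ℝ) → (Fin n → ℝ) →ₗ[ℝ] (Fin n → ℝ) →ₗ[ℝ] (Fin n → ℝ))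
    (x b : ℝ → (Fin n → ℝ))
    (hx : ∀ t, HasDerivAt x (X (x t)) t)
    (hb : Differentiable ℝ b) :
    (∀ t, b t = fderiv ℝ (φ t) (x 0) (b 0)) ↔
      ∀ t, deriv b t + Γ (x t) (X (x t)) (b t)
        = (fderiv ℝ X (x t) (b t) + Γ (x t) (b t) (X (x t)))
          + (Γ (x t) (X (x t)) (b t) - Γ (x t) (b t) (X (x t))) := by
  have h1T : (1 : WithTop ℕ∞) ≤ ((⊤:ℕ∞) : WithTop ℕ∞) := by
    exact_mod_cast (le_top : (1:ℕ∞) ≤ ⊤)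
  set c : ℝ → (Fin n → ℝ) := fun t => fderiv ℝ (φ t) (x 0) (b 0) with hc
  have hcder : ∀ t, HasDerivAt c (fderiv ℝ X (x t) (c t)) t := fun t =>
    TIC_c_hasDerivAt X hX φ hφ0 hφflow hφsm x hx (b 0) t
  have hc0 : c 0 = b 0 := by
    show fderiv ℝ (φ 0) (x 0) (b 0) = b 0
    have hid : φ 0 = id := funext hφ0
    rw [hid, fderiv_id]
    rfl
  constructor
  · intro hbc t
    have hbceq : b = c := funext fun t => hbc t
    have hder : deriv b t = fderiv ℝ X (x t) (b t) := by
      rw [hbceq]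
      exact (hcder t).deriv
    rw [hder]
    abel
  · intro hode
    have hbode : ∀ s, HasDerivAt b (fderiv ℝ X (x s) (b s)) s := by
      intro s
      have h1 : HasDerivAt b (deriv b s) s := (hb s).hasDerivAt
      have h2 := hode s
      have h4 : (fderiv ℝ X (x s) (b s) + Γ (x s) (b s) (X (x s)))
          + (Γ (x s) (X (x s)) (b s) - Γ (x s) (b s) (X (x s)))
          = fderiv ℝ X (x s) (b s) + Γ (x s) (X (x s)) (b s) := by abel
      rw [h4] at h2
      have h3 : deriv b s = fderiv ℝ X (x s) (b s) := add_right_cancel h2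
      rwa [h3] at h1
    have hA : Continuous (fun s => fderiv ℝ X (x s)) :=
      (hX.continuous_fderiv (by simp)).comp
        (continuous_iff_continuousAt.2 fun t => (hx t).continuousAt)
    exact TIC_linear_unique (fun s => fderiv ℝ X (x s)) hA b c hbode hcder hc0.symm
end

section
/- Let π be a Poisson bivector on M, H ∈ C^∞(M), ∇ a torsion-free connection, K^H(u) = ∇_u X_H, and α(t) a path in T*M with base path x(t) satisfying the stationarity equations ∇_{ẋ(t)} α = −(K^H_{x(t)})*(α(t)) and ẋ(t) = X_H(x(t)). Then c(t) := π^#_{x(t)}(α(t)) − ẋ(t) satisfies the linear ODE ∇_{ẋ(t)} c = K^H_{x(t)}(c(t)); in particular, since L_{X_H}π = 0, if c(0) = 0 then c ≡ 0, i.e. α is a cotangent path for π. -/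
open Matrix

noncomputable def KH {n : ℕ} (π : (Fin n → ℝ) → Matrix (Fin n) (Fin n) ℝ)
    (Γ : (Fin n → ℝ) → (Fin n → ℝ) →ₗ[ℝ] (Fin n → ℝ) →ₗ[ℝ] (Fin n → ℝ))
    (H : (Fin n → ℝ) → ℝ) (m : Fin n → ℝ) : Matrix (Fin n) (Fin n) ℝ :=
  Matrix.of fun i l =>
    fderiv ℝ (fun p => ham π H p i) m (Pi.single l 1)
      + Γ m (Pi.single l 1) (ham π H m) i

lemma clm_pi_apply {n : ℕ} (φ : (Fin n → ℝ) →L[ℝ] ℝ) (u : Fin n → ℝ) :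
    φ u = ∑ l, u l * φ (Pi.single l 1) := by
  have h : u = ∑ l : Fin n, u l • (Pi.single l 1 : Fin n → ℝ) := by
    rw [pi_eq_sum_univ u]
    congr 1; ext l j
    simp [Pi.single_apply, eq_comm]
  conv_lhs => rw [h]
  rw [map_sum]
  simp [smul_eq_mul]

lemma lm_pi_apply {n : ℕ} (φ : (Fin n → ℝ) →ₗ[ℝ] (Fin n → ℝ)) (u : Fin n → ℝ) (i : Fin n) :
    φ u i = ∑ l, u l * φ (Pi.single l 1) i := by
  have h : u = ∑ l : Fin n, u l • (Pi.single l 1 : Fin n → ℝ) := by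
    rw [pi_eq_sum_univ u]
    congr 1; ext l j
    simp [Pi.single_apply, eq_comm]
  conv_lhs => rw [h]
  rw [map_sum]
  simp [smul_eq_mul]

lemma topadd : (↑(⊤:ℕ∞) + 1 : WithTop ℕ∞) = ↑(⊤:ℕ∞) := by
  rw [show (1 : WithTop ℕ∞) = ((1:ℕ∞) : WithTop ℕ∞) from rfl, ← WithTop.coe_add]
  norm_num

lemma gradf_smooth {n : ℕ} {H : (Fin n → ℝ) → ℝ} (hH : ContDiff ℝ (⊤:ℕ∞) H) (l : Fin n) :
    ContDiff ℝ (⊤:ℕ∞) fun m => gradf H m l := by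
  exact (hH.fderiv_right (le_of_eq topadd)).clm_apply contDiff_const

-- second derivative symmetry

lemma pd_pd_symm {n : ℕ} {H : (Fin n → ℝ) → ℝ} (hH : ContDiff ℝ (⊤:ℕ∞) H)
    (m : Fin n → ℝ) (k l : Fin n) :
    fderiv ℝ (fun p => gradf H p l) m (Pi.single k 1)
      = fderiv ℝ (fun p => gradf H p k) m (Pi.single l 1) := by
  have hd : DifferentiableAt ℝ (fderiv ℝ H) m :=
    ((hH.fderiv_right (le_of_eq topadd)).differentiable (by simp)) m
  have e : ∀ a b : Fin n, fderiv ℝ (fun p => gradf H p a) m (Pi.single b 1)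
      = fderiv ℝ (fderiv ℝ H) m (Pi.single b 1) (Pi.single a 1) := by
    intro a b
    have : (fun p => gradf H p a) = fun p => (fderiv ℝ H p) (Pi.single a 1) := rfl
    rw [this, fderiv_clm_apply hd (differentiableAt_const _)]
    simp
  rw [e, e]
  have hsymm : IsSymmSndFDerivAt ℝ H m := (hH.contDiffAt).isSymmSndFDerivAt (by rw [minSmoothness_of_isRCLikeNormedField]; rw [show (2:WithTop ℕ∞) = ((2:ℕ∞):WithTop ℕ∞) from rfl]; exact WithTop.coe_le_coe.mpr le_top)
  exact hsymm _ _

lemma ham_apply {n : ℕ} (π : (Fin n → ℝ) → Matrix (Fin n) (Fin n) ℝ)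
    (H : (Fin n → ℝ) → ℝ) (m : Fin n → ℝ) (i : Fin n) :
    ham π H m i = ∑ l, π m i l * gradf H m l := rfl

lemma ham_smooth {n : ℕ} {π : (Fin n → ℝ) → Matrix (Fin n) (Fin n) ℝ}
    (hs : SmoothBiv π) {H : (Fin n → ℝ) → ℝ} (hH : ContDiff ℝ (⊤:ℕ∞) H) (i : Fin n) :
    ContDiff ℝ (⊤:ℕ∞) fun m => ham π H m i := by
  simp only [ham_apply]
  exact ContDiff.sum fun l _ => (hs i l).mul (gradf_smooth hH l)

lemma jacobian_ham {n : ℕ} {π : (Fin n → ℝ) → Matrix (Fin n) (Fin n) ℝ}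
    (hs : SmoothBiv π) {H : (Fin n → ℝ) → ℝ} (hH : ContDiff ℝ (⊤:ℕ∞) H)
    (m : Fin n → ℝ) (i k : Fin n) :
    jacobianM (ham π H) m i k
      = ∑ l, (pd (fun p => π p i l) k m * gradf H m l
          + π m i l * fderiv ℝ (fun p => gradf H p l) m (Pi.single k 1)) := by
  have hg : ∀ l : Fin n, DifferentiableAt ℝ (fun p => gradf H p l) m :=
    fun l => ((gradf_smooth hH l).differentiable (by simp)) m
  have hπ : ∀ a b : Fin n, DifferentiableAt ℝ (fun p => π p a b) m :=
    fun a b => ((hs a b).differentiable (by simp)) m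
  have h1 : (fun p => ham π H p i) = fun p => ∑ l, π p i l * gradf H p l := by
    funext p; exact ham_apply π H p i
  show fderiv ℝ (fun p => ham π H p i) m (Pi.single k 1) = _
  rw [h1, fderiv_fun_sum (fun l _ => ((hπ i l).fun_mul (hg l)))]
  rw [ContinuousLinearMap.sum_apply]
  refine Finset.sum_congr rfl fun l _ => ?_
  rw [fderiv_fun_mul (hπ i l) (hg l)]
  simp only [pd, ContinuousLinearMap.add_apply, ContinuousLinearMap.smul_apply, smul_eq_mul]
  ring

lemma lie_deriv_zero {n : ℕ} {π : (Fin n → ℝ) → Matrix (Fin n) (Fin n) ℝ}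
    (hs : SmoothBiv π) (ha : AntiSymmBiv π)
    (hpoisson : ∀ m i j k, schouten π m i j k = 0)
    {H : (Fin n → ℝ) → ℝ} (hH : ContDiff ℝ (⊤:ℕ∞) H) (m : Fin n → ℝ) (i j : Fin n) :
    fderiv ℝ (fun p => π p i j) m (ham π H m)
      = (∑ k, jacobianM (ham π H) m i k * π m k j)
        + ∑ k, π m i k * jacobianM (ham π H) m j k := by
  set g : Fin n → ℝ := gradf H m with hgdef
  set P : Fin n → Fin n → ℝ := fun a b => π m a b with hPdef
  set D : Fin n → Fin n → Fin n → ℝ := fun a b k => pd (fun p => π p a b) k m with hDdef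
  set S : Fin n → Fin n → ℝ :=
    fun k l => fderiv ℝ (fun p => gradf H p l) m (Pi.single k 1) with hSdef
  -- antisymmetry of P and D
  have hP : ∀ a b, P b a = -P a b := by
    intro a b
    have := congrFun (congrFun (ha m) a) b
    simpa [Matrix.transpose_apply] using this
  have hDanti : ∀ a b k, D b a k = -D a b k := by
    intro a b k
    have hfun : (fun p => π p b a) = fun p => -π p a b := by
      funext p
      have := congrFun (congrFun (ha p) a) b
      simpa [Matrix.transpose_apply] using this
    simp only [hDdef, pd, hfun, fderiv_neg]
    simp
  have hSsym : ∀ k l, S k l = S l k := fun k l => pd_pd_symm hH m k l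
  -- Jacobi identity
  have key : ∀ l, ∑ k, (P k i * D j l k + P k j * D l i k + P k l * D i j k) = 0 := by
    intro l
    have := hpoisson m i j l
    simpa [schouten, hPdef, hDdef] using this
  -- expand LHS
  have hLHS : fderiv ℝ (fun p => π p i j) m (ham π H m)
      = ∑ l, g l * (∑ k, P k l * D i j k) := by
    rw [clm_pi_apply]
    have : ∀ k, ham π H m k = ∑ r, P k r * g r := fun k => rfl
    calc ∑ k, ham π H m k * (fderiv ℝ (fun p => π p i j) m) (Pi.single k 1)
        = ∑ k, ∑ r, P k r * g r * D i j k := by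
          refine Finset.sum_congr rfl fun k _ => ?_
          rw [this k, Finset.sum_mul]
          exact Finset.sum_congr rfl fun r _ => rfl
      _ = ∑ r, ∑ k, P k r * g r * D i j k := Finset.sum_comm
      _ = ∑ l, g l * (∑ k, P k l * D i j k) := by
          refine Finset.sum_congr rfl fun r _ => ?_
          rw [Finset.mul_sum]
          refine Finset.sum_congr rfl fun k _ => ?_
          ring
  rw [hLHS]
  -- expand RHS
  have hJ : ∀ a k, jacobianM (ham π H) m a k
      = ∑ l, (D a l k * g l + P a l * S k l) := fun a k => jacobian_ham hs hH m a k
  have hRHS1 : (∑ k, jacobianM (ham π H) m i k * π m k j)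
      = (∑ l, g l * ∑ k, D i l k * P k j) + ∑ k, ∑ l, P i l * S k l * P k j := by
    calc (∑ k, jacobianM (ham π H) m i k * π m k j)
        = ∑ k, ∑ l, (D i l k * g l * P k j + P i l * S k l * P k j) := by
          refine Finset.sum_congr rfl fun k _ => ?_
          rw [hJ i k, Finset.sum_mul]
          refine Finset.sum_congr rfl fun l _ => ?_
          ring
      _ = (∑ k, ∑ l, D i l k * g l * P k j) + ∑ k, ∑ l, P i l * S k l * P k j := by
          rw [← Finset.sum_add_distrib]
          refine Finset.sum_congr rfl fun k _ => ?_
          rw [← Finset.sum_add_distrib]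
      _ = (∑ l, g l * ∑ k, D i l k * P k j) + ∑ k, ∑ l, P i l * S k l * P k j := by
          congr 1
          rw [Finset.sum_comm]
          refine Finset.sum_congr rfl fun l _ => ?_
          rw [Finset.mul_sum]
          refine Finset.sum_congr rfl fun k _ => ?_
          ring
  have hRHS2 : (∑ k, π m i k * jacobianM (ham π H) m j k)
      = (∑ l, g l * ∑ k, P i k * D j l k) + ∑ k, ∑ l, P i k * P j l * S k l := by
    calc (∑ k, π m i k * jacobianM (ham π H) m j k)
        = ∑ k, ∑ l, (P i k * D j l k * g l + P i k * P j l * S k l) := by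
          refine Finset.sum_congr rfl fun k _ => ?_
          rw [hJ j k, Finset.mul_sum]
          refine Finset.sum_congr rfl fun l _ => ?_
          ring
      _ = (∑ k, ∑ l, P i k * D j l k * g l) + ∑ k, ∑ l, P i k * P j l * S k l := by
          rw [← Finset.sum_add_distrib]
          refine Finset.sum_congr rfl fun k _ => ?_
          rw [← Finset.sum_add_distrib]
      _ = (∑ l, g l * ∑ k, P i k * D j l k) + ∑ k, ∑ l, P i k * P j l * S k l := by
          congr 1
          rw [Finset.sum_comm]
          refine Finset.sum_congr rfl fun l _ => ?_
          rw [Finset.mul_sum]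
          refine Finset.sum_congr rfl fun k _ => ?_
          ring
  rw [hRHS1, hRHS2]
  -- second-derivative cancellation
  have hScancel : (∑ k, ∑ l, P i l * S k l * P k j) + (∑ k, ∑ l, P i k * P j l * S k l) = 0 := by
    have h2 : (∑ k, ∑ l, P i k * P j l * S k l) = ∑ k, ∑ l, -(P i l * S k l * P k j) := by
      rw [Finset.sum_comm]
      refine Finset.sum_congr rfl fun k _ => Finset.sum_congr rfl fun l _ => ?_
      rw [hSsym l k, hP k j]
      ring
    rw [h2, ← Finset.sum_add_distrib]
    simp [← Finset.sum_add_distrib]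
  -- first-derivative identification via Jacobi
  have hfirst : ∀ l, g l * (∑ k, P k l * D i j k)
      = g l * ∑ k, D i l k * P k j + g l * ∑ k, P i k * D j l k := by
    intro l
    have hk := key l
    have : (∑ k, P k l * D i j k) = (∑ k, D i l k * P k j) + ∑ k, P i k * D j l k := by
      have expand : ∀ k, P k i * D j l k + P k j * D l i k + P k l * D i j k
          = P k l * D i j k - D i l k * P k j - P i k * D j l k := by
        intro k
        rw [hDanti l i k, hP i k]
        ring
      rw [show (∑ k, P k l * D i j k)
          = ∑ k, ((P k i * D j l k + P k j * D l i k + P k l * D i j k)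
            + (D i l k * P k j + P i k * D j l k)) by
        refine Finset.sum_congr rfl fun k _ => ?_
        rw [expand k]; ring]
      rw [Finset.sum_add_distrib, hk, zero_add, Finset.sum_add_distrib]
    rw [this]
    ring
  calc ∑ l, g l * ∑ k, P k l * D i j k
      = ∑ l, (g l * ∑ k, D i l k * P k j + g l * ∑ k, P i k * D j l k) :=
        Finset.sum_congr rfl fun l _ => hfirst l
    _ = (∑ l, g l * ∑ k, D i l k * P k j) + ∑ l, g l * ∑ k, P i k * D j l k :=
        Finset.sum_add_distrib
    _ = ((∑ l, g l * ∑ k, D i l k * P k j) + ∑ k, ∑ l, P i l * S k l * P k j)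
        + ((∑ l, g l * ∑ k, P i k * D j l k) + ∑ k, ∑ l, P i k * P j l * S k l) := by
        have := hScancel
        linarith

lemma mulVec_lipschitz {n : ℕ} (M : Matrix (Fin n) (Fin n) ℝ) (K : NNReal)
    (hK : (∑ i, ∑ j, |M i j|) ≤ K) : LipschitzWith K (fun u => M *ᵥ u) := by
  refine LipschitzWith.of_dist_le_mul fun u v => ?_
  refine (dist_pi_le_iff (mul_nonneg K.2 dist_nonneg)).2 fun i => ?_
  rw [Real.dist_eq]
  have e : (M *ᵥ u) i - (M *ᵥ v) i = ∑ j, M i j * (u j - v j) := by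
    show (∑ j, M i j * u j) - (∑ j, M i j * v j) = _
    rw [← Finset.sum_sub_distrib]
    refine Finset.sum_congr rfl fun j _ => by ring
  rw [e]
  calc |∑ j, M i j * (u j - v j)| ≤ ∑ j, |M i j * (u j - v j)| :=
        Finset.abs_sum_le_sum_abs _ _
    _ ≤ ∑ j, |M i j| * dist u v := by
        refine Finset.sum_le_sum fun j _ => ?_
        rw [abs_mul]
        exact mul_le_mul_of_nonneg_left
          (by rw [← Real.dist_eq]; exact dist_le_pi_dist u v j) (abs_nonneg _)
    _ = (∑ j, |M i j|) * dist u v := by rw [Finset.sum_mul]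
    _ ≤ (∑ i', ∑ j, |M i' j|) * dist u v := by
        refine mul_le_mul_of_nonneg_right ?_ dist_nonneg
        exact Finset.single_le_sum (f := fun i' => ∑ j, |M i' j|)
          (fun i' _ => Finset.sum_nonneg fun j _ => abs_nonneg _) (Finset.mem_univ i)
    _ ≤ K * dist u v := mul_le_mul_of_nonneg_right hK dist_nonneg

theorem aux_part1 {n : ℕ}
    (π : (Fin n → ℝ) → Matrix (Fin n) (Fin n) ℝ)
    (hs : SmoothBiv π) (ha : AntiSymmBiv π)
    (hpoisson : ∀ m i j k, schouten π m i j k = 0)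
    (Γ : (Fin n → ℝ) → (Fin n → ℝ) →ₗ[ℝ] (Fin n → ℝ) →ₗ[ℝ] (Fin n → ℝ))
    (hΓsym : ∀ m v w, Γ m v w = Γ m w v)
    (H : (Fin n → ℝ) → ℝ) (hH : ContDiff ℝ (⊤ : ℕ∞) H)
    (x α : ℝ → (Fin n → ℝ))
    (hx : ∀ t, HasDerivAt x (ham π H (x t)) t)
    (hα : ∀ t i, HasDerivAt (fun s => α s i)
      (∑ j, Γ (x t) (ham π H (x t)) (Pi.single i 1) j * α t j
        - ∑ j, α t j * KH π Γ H (x t) j i) t) :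
    ∀ t i, HasDerivAt (fun s => (π (x s) *ᵥ α s - ham π H (x s)) i)
        ((KH π Γ H (x t) *ᵥ (π (x t) *ᵥ α t - ham π H (x t))) i
          - Γ (x t) (ham π H (x t)) (π (x t) *ᵥ α t - ham π H (x t)) i) t := by
  intro t i
  have h1 : (1:ℕ∞) ≤ ⊤ := le_top
  set m := x t with hm
  set X := ham π H with hX
  set a := α t with hadef
  -- derivatives of coordinates
  have hπc : ∀ b c : Fin n, HasDerivAt (fun s => π (x s) b c)
      (fderiv ℝ (fun p => π p b c) m (X m)) t := by
    intro b c
    exact (((hs b c).differentiable (by simp)) m).hasFDerivAt.comp_hasDerivAt t (hx t)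
  have hhc : HasDerivAt (fun s => X (x s) i)
      (fderiv ℝ (fun p => X p i) m (X m)) t := by
    exact (((ham_smooth hs hH i).differentiable (by simp)) m).hasFDerivAt.comp_hasDerivAt t (hx t)
  set A' : Fin n → ℝ := fun jj => ∑ j, Γ m (X m) (Pi.single jj 1) j * a j
        - ∑ j, a j * KH π Γ H m j jj with hA'
  have hπα : HasDerivAt (fun s => (π (x s) *ᵥ α s) i)
      (∑ j, (fderiv ℝ (fun p => π p i j) m (X m) * a j + π m i j * A' j)) t := by
    have : (fun s => (π (x s) *ᵥ α s) i) = fun s => ∑ j, π (x s) i j * α s j := rfl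
    rw [this]
    exact HasDerivAt.fun_sum fun j _ => (hπc i j).mul (hα t j)
  have hc : HasDerivAt (fun s => (π (x s) *ᵥ α s - ham π H (x s)) i)
      ((∑ j, (fderiv ℝ (fun p => π p i j) m (X m) * a j + π m i j * A' j))
        - fderiv ℝ (fun p => X p i) m (X m)) t := by
    have : (fun s => (π (x s) *ᵥ α s - ham π H (x s)) i)
        = fun s => (π (x s) *ᵥ α s) i - X (x s) i := rfl
    rw [this]
    exact hπα.sub hhc
  convert hc using 1
  -- now the algebraic identity
  set J : Matrix (Fin n) (Fin n) ℝ := jacobianM X m with hJ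
  set P : Fin n → Fin n → ℝ := fun b c => π m b c with hP
  set G : Fin n → Fin n → ℝ := fun b c => Γ m (Pi.single c 1) (X m) b with hG
  have hKH : ∀ b c, KH π Γ H m b c = J b c + G b c := fun b c => rfl
  -- Γ applied to a vector, coordinatewise
  have hΓexp : ∀ u : Fin n → ℝ, ∀ b, Γ m (X m) u b = ∑ c, u c * G b c := by
    intro u b
    rw [lm_pi_apply (Γ m (X m)) u b]
    exact Finset.sum_congr rfl fun c _ => by rw [hΓsym m (X m) (Pi.single c 1)]
  -- A' simplification
  have hA'simp : ∀ jj, A' jj = -∑ k, a k * J k jj := by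
    intro jj
    rw [hA']
    have e1 : ∀ j : Fin n, Γ m (X m) (Pi.single jj 1) j = G j jj := fun j => by
      rw [hΓsym m (X m) (Pi.single jj 1)]
    calc (∑ j, Γ m (X m) (Pi.single jj 1) j * a j) - ∑ j, a j * KH π Γ H m j jj
        = ∑ j, (G j jj * a j - a j * (J j jj + G j jj)) := by
          rw [← Finset.sum_sub_distrib]
          exact Finset.sum_congr rfl fun j _ => by rw [e1 j, hKH j jj]
      _ = ∑ j, -(a j * J j jj) := Finset.sum_congr rfl fun j _ => by ring
      _ = -∑ k, a k * J k jj := by rw [← Finset.sum_neg_distrib]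
  -- common normal form
  set c0 : Fin n → ℝ := π m *ᵥ a - X m with hc0
  have hfX : fderiv ℝ (fun p => X p i) m (X m) = ∑ l, X m l * J i l :=
    clm_pi_apply (fderiv ℝ (fun p => X p i) m) (X m)
  have hc0j : ∀ j, c0 j = (∑ k, P j k * a k) - X m j := fun j => rfl
  have targ_eq : (KH π Γ H m *ᵥ c0) i - Γ m (X m) c0 i
      = (∑ j, ∑ k, J i j * P j k * a k) - ∑ l, X m l * J i l := by
    have h1 : (KH π Γ H m *ᵥ c0) i = ∑ j, (J i j + G i j) * c0 j := by
      show (∑ j, KH π Γ H m i j * c0 j) = _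
      exact Finset.sum_congr rfl fun j _ => by rw [hKH i j]
    have h2 : Γ m (X m) c0 i = ∑ j, c0 j * G i j := hΓexp c0 i
    rw [h1, h2]
    calc (∑ j, (J i j + G i j) * c0 j) - ∑ j, c0 j * G i j
        = ∑ j, J i j * c0 j := by
          rw [← Finset.sum_sub_distrib]
          exact Finset.sum_congr rfl fun j _ => by ring
      _ = ∑ j, (J i j * ∑ k, P j k * a k) - ∑ j, J i j * X m j := by
          rw [← Finset.sum_sub_distrib]
          refine Finset.sum_congr rfl fun j _ => ?_
          rw [hc0j j]; ring
      _ = (∑ j, ∑ k, J i j * P j k * a k) - ∑ l, X m l * J i l := by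
          congr 1
          · exact Finset.sum_congr rfl fun j _ => by rw [Finset.mul_sum]; exact Finset.sum_congr rfl fun k _ => by ring
          · exact Finset.sum_congr rfl fun l _ => by ring
  have deriv_eq : (∑ j, (fderiv ℝ (fun p => π p i j) m (X m) * a j + π m i j * A' j))
        - fderiv ℝ (fun p => X p i) m (X m)
      = (∑ j, ∑ k, J i j * P j k * a k) - ∑ l, X m l * J i l := by
    rw [hfX]
    congr 1
    calc (∑ j, (fderiv ℝ (fun p => π p i j) m (X m) * a j + π m i j * A' j))
        = ∑ j, (((∑ k, J i k * P k j) + ∑ k, P i k * J j k) * a j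
            + P i j * (-∑ k, a k * J k j)) := by
          refine Finset.sum_congr rfl fun j _ => ?_
          rw [lie_deriv_zero hs ha hpoisson hH m i j, hA'simp j]
      _ = ∑ j, ((∑ k, J i k * P k j * a j) + ((∑ k, P i k * J j k * a j)
            - ∑ k, P i j * (a k * J k j))) := by
          refine Finset.sum_congr rfl fun j _ => ?_
          rw [add_mul, Finset.sum_mul, Finset.sum_mul, mul_neg, Finset.mul_sum]
          ring
      _ = (∑ j, ∑ k, J i k * P k j * a j)
            + ((∑ j, ∑ k, P i k * J j k * a j) - ∑ j, ∑ k, P i j * (a k * J k j)) := by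
          rw [Finset.sum_add_distrib, Finset.sum_sub_distrib]
      _ = ∑ j, ∑ k, J i j * P j k * a k := by
          have hcancel : (∑ j, ∑ k, P i k * J j k * a j) = ∑ j, ∑ k, P i j * (a k * J k j) := by
            rw [Finset.sum_comm]
            exact Finset.sum_congr rfl fun j _ => Finset.sum_congr rfl fun k _ => by ring
          rw [hcancel, sub_self, add_zero, Finset.sum_comm]
  rw [targ_eq, deriv_eq]

theorem aux_part2 {n : ℕ}
    (π : (Fin n → ℝ) → Matrix (Fin n) (Fin n) ℝ)
    (hs : SmoothBiv π)
    (Γ : (Fin n → ℝ) → (Fin n → ℝ) →ₗ[ℝ] (Fin n → ℝ) →ₗ[ℝ] (Fin n → ℝ))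
    (hΓs : ∀ v w, ContDiff ℝ (⊤ : ℕ∞) fun m => Γ m v w)
    (hΓsym : ∀ m v w, Γ m v w = Γ m w v)
    (H : (Fin n → ℝ) → ℝ) (hH : ContDiff ℝ (⊤ : ℕ∞) H)
    (x α : ℝ → (Fin n → ℝ))
    (hx : ∀ t, HasDerivAt x (ham π H (x t)) t)
    (hd : ∀ t i, HasDerivAt (fun s => (π (x s) *ᵥ α s - ham π H (x s)) i)
        ((KH π Γ H (x t) *ᵥ (π (x t) *ᵥ α t - ham π H (x t))) i
          - Γ (x t) (ham π H (x t)) (π (x t) *ᵥ α t - ham π H (x t)) i) t) :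
    π (x 0) *ᵥ α 0 - ham π H (x 0) = 0 →
      ∀ t, π (x t) *ᵥ α t - ham π H (x t) = 0 := by
  intro h0 t
  have h1 : (1:ℕ∞) ≤ ⊤ := le_top
  set c : ℝ → (Fin n → ℝ) := fun s => π (x s) *ᵥ α s - ham π H (x s) with hcdef
  set A : ℝ → Matrix (Fin n) (Fin n) ℝ := fun s => Matrix.of fun i j =>
    KH π Γ H (x s) i j - Γ (x s) (Pi.single j 1) (ham π H (x s)) i with hAdef
  have hv_eq : ∀ s (u : Fin n → ℝ) i, (A s *ᵥ u) i
      = (KH π Γ H (x s) *ᵥ u) i - Γ (x s) (ham π H (x s)) u i := by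
    intro s u i
    have e1 : Γ (x s) (ham π H (x s)) u i
        = ∑ j, u j * Γ (x s) (Pi.single j 1) (ham π H (x s)) i := by
      rw [lm_pi_apply (Γ (x s) (ham π H (x s))) u i]
      exact Finset.sum_congr rfl fun j _ => by
        rw [hΓsym (x s) (ham π H (x s)) (Pi.single j 1)]
    rw [e1]
    show (∑ j, A s i j * u j) = (∑ j, KH π Γ H (x s) i j * u j) - _
    rw [← Finset.sum_sub_distrib]
    refine Finset.sum_congr rfl fun j _ => ?_
    show (KH π Γ H (x s) i j - Γ (x s) (Pi.single j 1) (ham π H (x s)) i) * u j = _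
    ring
  have hcD : ∀ s, HasDerivAt c (A s *ᵥ c s) s := by
    intro s
    refine hasDerivAt_pi.2 fun i => ?_
    rw [hv_eq s (c s) i]
    exact hd s i
  -- continuity of x
  have hxc : Continuous x := by
    refine continuous_iff_continuousAt.2 fun s => (hx s).continuousAt
  -- continuity of entries of A
  have hKHc : ∀ i j, Continuous fun m => KH π Γ H m i j := by
    intro i j
    have hc1 : Continuous fun m => fderiv ℝ (fun p => ham π H p i) m (Pi.single j 1) := by
      exact ((ham_smooth hs hH i).continuous_fderiv (by simp)).clm_apply
        continuous_const
    have hc2 : Continuous fun m => Γ m (Pi.single j 1) (ham π H m) i := by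
      have expand : (fun m => Γ m (Pi.single j 1) (ham π H m) i)
          = fun m => ∑ k, ham π H m k * Γ m (Pi.single j 1) (Pi.single k 1) i := by
        funext m
        exact lm_pi_apply (Γ m (Pi.single j 1)) (ham π H m) i
      rw [expand]
      refine continuous_finset_sum _ fun k _ => ?_
      exact ((ham_smooth hs hH k).continuous).mul
        ((continuous_apply i).comp (hΓs (Pi.single j 1) (Pi.single k 1)).continuous)
    exact hc1.add hc2
  have hAc : ∀ i j, Continuous fun s => A s i j := by
    intro i j
    have hΓc : Continuous fun m => Γ m (Pi.single j 1) (ham π H m) i := by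
      have expand : (fun m => Γ m (Pi.single j 1) (ham π H m) i)
          = fun m => ∑ k, ham π H m k * Γ m (Pi.single j 1) (Pi.single k 1) i := by
        funext m
        exact lm_pi_apply (Γ m (Pi.single j 1)) (ham π H m) i
      rw [expand]
      refine continuous_finset_sum _ fun k _ => ?_
      exact ((ham_smooth hs hH k).continuous).mul
        ((continuous_apply i).comp (hΓs (Pi.single j 1) (Pi.single k 1)).continuous)
    exact ((hKHc i j).comp hxc).sub (hΓc.comp hxc)
  set N : ℝ → ℝ := fun s => ∑ i, ∑ j, |A s i j| with hN
  have hNc : Continuous N := by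
    refine continuous_finset_sum _ fun i _ => continuous_finset_sum _ fun j _ => (hAc i j).abs
  set T : ℝ := |t| + 1 with hT
  have hTpos : 0 < T := by positivity
  obtain ⟨s₀, hs₀mem, hs₀max⟩ :=
    (isCompact_Icc (a := -T) (b := T)).exists_isMaxOn
      ⟨0, by constructor <;> [linarith; linarith]⟩ hNc.continuousOn
  set K : NNReal := (N s₀).toNNReal with hK
  have hNnonneg : ∀ s, 0 ≤ N s := fun s =>
    Finset.sum_nonneg fun i _ => Finset.sum_nonneg fun j _ => abs_nonneg _
  set proj : ℝ → ℝ := fun s => max (-T) (min s T) with hproj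
  have hprojmem : ∀ s, proj s ∈ Set.Icc (-T) T := by
    intro s
    exact ⟨le_max_left _ _, max_le (by linarith) (min_le_right _ _)⟩
  set v : ℝ → (Fin n → ℝ) → (Fin n → ℝ) := fun s u => A (proj s) *ᵥ u with hv
  have hlip : ∀ s, LipschitzOnWith K (v s) Set.univ := by
    intro s
    refine (mulVec_lipschitz (A (proj s)) K ?_).lipschitzOnWith
    have : N (proj s) ≤ N s₀ := hs₀max (hprojmem s)
    calc (∑ i, ∑ j, |A (proj s) i j|) = N (proj s) := rfl
      _ ≤ N s₀ := this
      _ = K := (Real.coe_toNNReal _ (hNnonneg s₀)).symm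
  have hmem : t ∈ Set.Icc (-T) T := by
    constructor
    · have := neg_abs_le t; simp only [hT]; linarith
    · have := le_abs_self t; simp only [hT]; linarith
  have heq : Set.EqOn c (fun _ => 0) (Set.Icc (-T) T) := by
    refine ODE_solution_unique_of_mem_Icc (s := fun _ => Set.univ) (fun s _ => hlip s)
      (t₀ := 0) ⟨by linarith, by linarith⟩
      ((continuous_iff_continuousAt.2 fun s => (hcD s).continuousAt).continuousOn) ?_
      (fun _ _ => Set.mem_univ _)
      continuousOn_const ?_ (fun _ _ => Set.mem_univ _) (by simpa using h0)
    · intro s hsmem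
      have hps : proj s = s := by
        rcases hsmem with ⟨hl, hr⟩
        rw [hproj]
        simp only [min_eq_left (le_of_lt hr), max_eq_right (le_of_lt hl)]
      have : v s (c s) = A s *ᵥ c s := by rw [hv]; simp only [hps]
      rw [this]
      exact hcD s
    · intro s hsmem
      have : v s ((fun _ => (0:Fin n → ℝ)) s) = 0 := by
        rw [hv]; simp [Matrix.mulVec_zero]
      rw [this]
      exact hasDerivAt_const _ _
  exact heq hmem

theorem stationary_points_are_cotangent_for_poisson {n : ℕ}
    (π : (Fin n → ℝ) → Matrix (Fin n) (Fin n) ℝ)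
    (hs : SmoothBiv π) (ha : AntiSymmBiv π)
    (hpoisson : ∀ m i j k, schouten π m i j k = 0)
    (Γ : (Fin n → ℝ) → (Fin n → ℝ) →ₗ[ℝ] (Fin n → ℝ) →ₗ[ℝ] (Fin n → ℝ))
    (hΓs : ∀ v w, ContDiff ℝ (⊤ : ℕ∞) fun m => Γ m v w)
    (hΓsym : ∀ m v w, Γ m v w = Γ m w v)
    (H : (Fin n → ℝ) → ℝ) (hH : ContDiff ℝ (⊤ : ℕ∞) H)
    (x α : ℝ → (Fin n → ℝ))
    (hx : ∀ t, HasDerivAt x (ham π H (x t)) t)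
    (hα : ∀ t i, HasDerivAt (fun s => α s i)
      (∑ j, Γ (x t) (ham π H (x t)) (Pi.single i 1) j * α t j
        - ∑ j, α t j * KH π Γ H (x t) j i) t) :
    (∀ t i, HasDerivAt (fun s => (π (x s) *ᵥ α s - ham π H (x s)) i)
        ((KH π Γ H (x t) *ᵥ (π (x t) *ᵥ α t - ham π H (x t))) i
          - Γ (x t) (ham π H (x t)) (π (x t) *ᵥ α t - ham π H (x t)) i) t) ∧
    (π (x 0) *ᵥ α 0 - ham π H (x 0) = 0 →
      ∀ t, π (x t) *ᵥ α t - ham π H (x t) = 0) := by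
  refine ⟨aux_part1 π hs ha hpoisson Γ hΓsym H hH x α hx hα, ?_⟩
  exact aux_part2 π hs Γ hΓs hΓsym H hH x α hx
    (aux_part1 π hs ha hpoisson Γ hΓsym H hH x α hx hα)
end
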